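/- arXiv:math/9202208 — 8 statements merged into one kernel-verified Lean document; each statement's English description precedes it below -/
import Mathlib

section
/- Let $M$ and $N$ be smooth connected manifolds and let $i : M \to N$ be an immersion. Suppose $f : M \to M$ is a diffeomorphism with $i \circ f = i$ and $f$ has a fixed point $x_0 \in M$. Then $f = \mathrm{id}_M$. -/
open Function Set
open scoped Manifold Topology ContDiff

/-- An immersion at a point is locally injective. -/
lemma localInj_aux
    {E : Type*} [NormedAddCommGroup E] [NormedSpace ℝ E] [FiniteDimensional ℝ E]
    {H : Type*} [TopologicalSpace H] {I : ModelWithCorners ℝ E H}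
    {M : Type*} [TopologicalSpace M] [ChartedSpace H M] [I.Boundaryless]
    {E' : Type*} [NormedAddCommGroup E'] [NormedSpace ℝ E'] [FiniteDimensional ℝ E']
    {H' : Type*} [TopologicalSpace H'] {J : ModelWithCorners ℝ E' H'}
    {N : Type*} [TopologicalSpace N] [ChartedSpace H' N] [J.Boundaryless]
    (i : M → N) (x : M) (hi : ContMDiffAt I J ((⊤ : ℕ∞) : WithTop ℕ∞) i x)
    (himm : Function.Injective (mfderiv I J i x)) :
    ∃ U ∈ 𝓝 x, Set.InjOn i U := by
  set φ := extChartAt I x with hφ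
  set ψ := extChartAt J (i x) with hψ
  set g : E → E' := ψ ∘ i ∘ φ.symm with hg
  have hrange : Set.range I = Set.univ := I.range_eq_univ
  -- g is C^∞ at u₀
  have hgsmooth : ContDiffAt ℝ ((⊤ : ℕ∞) : WithTop ℕ∞) g (φ x) := by
    have := (contMDiffAt_iff.mp hi).2
    rw [hrange, contDiffWithinAt_univ] at this
    exact this
  -- the derivative of g at u₀ is injective
  have hmd : MDifferentiableAt I J i x := hi.mdifferentiableAt (by simp)
  have hDg : mfderiv I J i x = fderiv ℝ g (φ x) := by
    rw [hmd.mfderiv, hrange, fderivWithin_univ]; rfl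
  set Dg : E →L[ℝ] E' := fderiv ℝ g (φ x) with hDgdef
  have hDginj : Function.Injective Dg := by rw [← hDg]; exact himm
  -- a continuous linear left inverse of Dg
  obtain ⟨L₀, hL₀⟩ := LinearMap.exists_leftInverse_of_injective (Dg : E →ₗ[ℝ] E')
    (by rwa [LinearMap.ker_eq_bot, ContinuousLinearMap.coe_coe])
  set L : E' →L[ℝ] E := LinearMap.toContinuousLinearMap L₀ with hLdef
  have hLg : L.comp Dg = ContinuousLinearMap.id ℝ E := by
    ext v
    have := LinearMap.congr_fun hL₀ v
    simpa [hLdef, LinearMap.coe_toContinuousLinearMap'] using this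
  -- L ∘ g has strict derivative id at u₀
  have hstrict : HasStrictFDerivAt g Dg (φ x) :=
    hgsmooth.hasStrictFDerivAt (by simp)
  have hstrict2 : HasStrictFDerivAt (L ∘ g)
      ((ContinuousLinearEquiv.refl ℝ E : E ≃L[ℝ] E) : E →L[ℝ] E) (φ x) := by
    have := L.hasStrictFDerivAt.comp (φ x) hstrict
    rwa [hLg] at this
  -- hence L ∘ g is injective near u₀, so g is injective near u₀
  have hVmem : (hstrict2.toOpenPartialHomeomorph (L ∘ g)).source ∈ 𝓝 (φ x) := by
    exact (hstrict2.toOpenPartialHomeomorph (L ∘ g)).open_source.mem_nhds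
      hstrict2.mem_toOpenPartialHomeomorph_source
  set V := (hstrict2.toOpenPartialHomeomorph (L ∘ g)).source with hV
  have hginjV : Set.InjOn g V := by
    intro a ha b hb hab
    have hinj : Set.InjOn (L ∘ g) V := by
      have := (hstrict2.toOpenPartialHomeomorph (L ∘ g)).injOn
      intro a ha b hb h
      exact this ha hb (by simpa [hstrict2.toOpenPartialHomeomorph_coe] using h)
    exact hinj ha hb (by simp [Function.comp, hab])
  -- transfer to a neighborhood of x
  refine ⟨φ.source ∩ φ ⁻¹' V, ?_, ?_⟩
  · exact Filter.inter_mem (extChartAt_source_mem_nhds x)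
      (((continuousAt_extChartAt x).preimage_mem_nhds hVmem))
  · intro a ⟨ha1, ha2⟩ b ⟨hb1, hb2⟩ hab
    have hga : g (φ a) = ψ (i a) := by simp [hg, φ.left_inv ha1]
    have hgb : g (φ b) = ψ (i b) := by simp [hg, φ.left_inv hb1]
    have : g (φ a) = g (φ b) := by rw [hga, hgb, hab]
    have := hginjV ha2 hb2 this
    exact φ.injOn ha1 hb1 this

/-- If an immersion `i : M → N` of smooth connected manifolds satisfies
`i ∘ f = i` for a diffeomorphism `f` of `M` having a fixed point `x₀`, then `f = id`. -/
theorem stmt_0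
    {E : Type*} [NormedAddCommGroup E] [NormedSpace ℝ E] [FiniteDimensional ℝ E]
    {H : Type*} [TopologicalSpace H] {I : ModelWithCorners ℝ E H}
    {M : Type*} [TopologicalSpace M] [ChartedSpace H M] [IsManifold I (⊤ : ℕ∞) M]
    [T2Space M] [SecondCountableTopology M] [ConnectedSpace M] [I.Boundaryless]
    {E' : Type*} [NormedAddCommGroup E'] [NormedSpace ℝ E'] [FiniteDimensional ℝ E']
    {H' : Type*} [TopologicalSpace H'] {J : ModelWithCorners ℝ E' H'}
    {N : Type*} [TopologicalSpace N] [ChartedSpace H' N] [IsManifold J (⊤ : ℕ∞) N]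
    [T2Space N] [SecondCountableTopology N] [ConnectedSpace N] [J.Boundaryless]
    (hdim : Module.finrank ℝ E ≤ Module.finrank ℝ E')
    (i : M → N) (hi : ContMDiff I J (⊤ : ℕ∞) i)
    (himm : ∀ x : M, Function.Injective (mfderiv I J i x))
    (f : M ≃ₘ⟮I, I⟯ M) (hf : ∀ x, i (f x) = i x)
    (x₀ : M) (hx₀ : f x₀ = x₀) :
    ∀ x, f x = x := by
  set S : Set M := {x | f x = x} with hS
  have hclosed : IsClosed S := isClosed_eq f.continuous continuous_id
  have hopen : IsOpen S := by
    rw [isOpen_iff_mem_nhds]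
    intro x hx
    obtain ⟨U, hU, hUinj⟩ := localInj_aux i x (hi x) (himm x)
    have hfx : f x = x := hx
    have hpre : f ⁻¹' U ∈ 𝓝 x := by
      have : ContinuousAt f x := f.continuous.continuousAt
      have := this.preimage_mem_nhds (by rwa [hfx] : U ∈ 𝓝 (f x))
      exact this
    filter_upwards [hU, hpre] with y hyU hyfU
    exact hUinj hyfU hyU (hf y)
  have : S = Set.univ :=
    IsClopen.eq_univ ⟨hclosed, hopen⟩ ⟨x₀, hx₀⟩
  intro x
  have : x ∈ S := this ▸ Set.mem_univ x
  exact this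
end

section
/- Let $i : M \to N$ be an immersion of smooth connected manifolds, and suppose some point of $i(M)$ has exactly one preimage under $i$, i.e., there is $x_0 \in M$ such that $i^{-1}(i(x_0)) = \{x_0\}$. Then $i$ is a free immersion: the only diffeomorphism $f$ of $M$ with $i \circ f = i$ is the identity. -/
open Function Set
open scoped Manifold Topology ContDiff


theorem locInj
    {E : Type*} [NormedAddCommGroup E] [NormedSpace ℝ E] [FiniteDimensional ℝ E]
    {H : Type*} [TopologicalSpace H] {I : ModelWithCorners ℝ E H}
    {M : Type*} [TopologicalSpace M] [ChartedSpace H M] [IsManifold I (⊤ : ℕ∞) M]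
    [I.Boundaryless]
    {E' : Type*} [NormedAddCommGroup E'] [NormedSpace ℝ E'] [FiniteDimensional ℝ E']
    {H' : Type*} [TopologicalSpace H'] {J : ModelWithCorners ℝ E' H'}
    {N : Type*} [TopologicalSpace N] [ChartedSpace H' N] [IsManifold J (⊤ : ℕ∞) N]
    (i : M → N) (hi : ContMDiff I J (⊤ : ℕ∞) i)
    (himm : ∀ x : M, Function.Injective (mfderiv I J i x)) (x : M) :
    ∃ U ∈ 𝓝 x, Set.InjOn i U := by
  set φ := extChartAt I x with hφ
  set ψ := extChartAt J (i x) with hψ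
  set g : E → E' := ψ ∘ i ∘ φ.symm with hg
  have hmd : MDifferentiableAt I J i x := (hi x).mdifferentiableAt (by simp)
  have hgc : ContDiffAt ℝ ((⊤ : ℕ∞) : WithTop ℕ∞) g (φ x) := by
    have := (contMDiffAt_iff.1 (hi x)).2
    rw [I.range_eq_univ, contDiffWithinAt_univ] at this
    exact this
  have hT : fderiv ℝ g (φ x) = mfderiv I J i x := by
    rw [hmd.mfderiv, I.range_eq_univ, fderivWithin_univ]
    rfl
  set T := fderiv ℝ g (φ x) with hTdef
  have hTinj : Function.Injective T := hT ▸ himm x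
  obtain ⟨l, hl⟩ := (T : E →ₗ[ℝ] E').exists_leftInverse_of_injective
    (LinearMap.ker_eq_bot.2 hTinj)
  set P : E' →L[ℝ] E := l.toContinuousLinearMap with hP
  have hPT : P.comp T = ContinuousLinearMap.id ℝ E := by
    ext v
    exact LinearMap.congr_fun hl v
  have hstrict : HasStrictFDerivAt g T (φ x) := hgc.hasStrictFDerivAt (by simp)
  have hPg : HasStrictFDerivAt (P ∘ g)
      ((ContinuousLinearEquiv.refl ℝ E : E ≃L[ℝ] E) : E →L[ℝ] E) (φ x) := by
    have := (P.hasStrictFDerivAt (x := g (φ x))).comp (φ x) hstrict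
    rwa [hPT] at this
  have hev := hPg.eventually_left_inverse
  obtain ⟨s, hs, h⟩ := hev.exists_mem
  have hsinj : Set.InjOn g s := by
    intro a ha b hb hab
    have h1 : hPg.localInverse _ _ _ (P (g a)) = a := h a ha
    have h2 : hPg.localInverse _ _ _ (P (g b)) = b := h b hb
    rw [hab] at h1
    exact h1.symm.trans h2
  refine ⟨φ.source ∩ i ⁻¹' ψ.source ∩ φ ⁻¹' s, ?_, ?_⟩
  · refine Filter.inter_mem (Filter.inter_mem (extChartAt_source_mem_nhds (I := I) x) ?_) ?_
    · exact (hi x).continuousAt.preimage_mem_nhds (extChartAt_source_mem_nhds (I := J) (i x))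
    · exact (continuousAt_extChartAt (I := I) x).preimage_mem_nhds hs
  · rintro a ⟨⟨ha1, ha2⟩, ha3⟩ b ⟨⟨hb1, hb2⟩, hb3⟩ hab
    have hga : g (φ a) = ψ (i a) := by simp [hg, φ.left_inv ha1]
    have hgb : g (φ b) = ψ (i b) := by simp [hg, φ.left_inv hb1]
    have : φ a = φ b := hsinj ha3 hb3 (by rw [hga, hgb, hab])
    exact φ.injOn ha1 hb1 this

/-- If an immersion `i : M → N` has a point of its image with exactly one
preimage, then `i` is a free immersion: any diffeomorphism `f` with `i ∘ f = i` is the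
identity. -/
theorem stmt_1
    {E : Type*} [NormedAddCommGroup E] [NormedSpace ℝ E] [FiniteDimensional ℝ E]
    {H : Type*} [TopologicalSpace H] {I : ModelWithCorners ℝ E H}
    {M : Type*} [TopologicalSpace M] [ChartedSpace H M] [IsManifold I (⊤ : ℕ∞) M]
    [T2Space M] [SecondCountableTopology M] [ConnectedSpace M] [I.Boundaryless]
    {E' : Type*} [NormedAddCommGroup E'] [NormedSpace ℝ E'] [FiniteDimensional ℝ E']
    {H' : Type*} [TopologicalSpace H'] {J : ModelWithCorners ℝ E' H'}
    {N : Type*} [TopologicalSpace N] [ChartedSpace H' N] [IsManifold J (⊤ : ℕ∞) N]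
    [T2Space N] [SecondCountableTopology N] [ConnectedSpace N] [J.Boundaryless]
    (hdim : Module.finrank ℝ E ≤ Module.finrank ℝ E')
    (i : M → N) (hi : ContMDiff I J (⊤ : ℕ∞) i)
    (himm : ∀ x : M, Function.Injective (mfderiv I J i x))
    (x₀ : M) (hx₀ : ∀ x, i x = i x₀ → x = x₀) :
    ∀ f : M ≃ₘ⟮I, I⟯ M, (∀ x, i (f x) = i x) → ∀ x, f x = x := by
  intro f hf
  set S : Set M := {x | f x = x} with hS
  have hS0 : x₀ ∈ S := hx₀ (f x₀) (hf x₀)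
  have hclosed : IsClosed S := isClosed_eq f.continuous continuous_id
  have hopen : IsOpen S := by
    rw [isOpen_iff_mem_nhds]
    intro x hx
    have hfx : f x = x := hx
    obtain ⟨U, hU, hUinj⟩ := locInj i hi himm x
    have h1 : f ⁻¹' U ∈ 𝓝 x := by
      refine f.continuous.continuousAt.preimage_mem_nhds ?_
      rwa [hfx]
    filter_upwards [h1, hU] with y h1y hUy
    exact hUinj h1y hUy (hf y)
  have : S = Set.univ := (IsClopen.eq_univ ⟨hclosed, hopen⟩ ⟨x₀, hS0⟩)
  intro x
  have : x ∈ S := this ▸ Set.mem_univ x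
  exact this
end

section
/- Let $i : M \to N$ be an immersion of smooth connected manifolds, let $f$ be a diffeomorphism of $M$ with $i \circ f = i$, and let $U \subseteq M$ be a connected open set on which $i$ restricts to an injective map. Then either $f(U) \cap U = \emptyset$ or $f(x) = x$ for all $x \in U$ (equivalently $f(U) = U$ and $f|_U = \mathrm{id}$). -/
open Function Set
open scoped Manifold Topology

/-- If `f` is a diffeomorphism fixing the immersion `i` (`i ∘ f = i`) and
`U` is a connected open set on which `i` is injective, then either `f(U) ∩ U = ∅` or
`f` is the identity on `U` (and `f(U) = U`). -/
theorem stmt_2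
    {E : Type*} [NormedAddCommGroup E] [NormedSpace ℝ E] [FiniteDimensional ℝ E]
    {H : Type*} [TopologicalSpace H] {I : ModelWithCorners ℝ E H}
    {M : Type*} [TopologicalSpace M] [ChartedSpace H M] [IsManifold I (⊤ : ℕ∞) M]
    [T2Space M] [SecondCountableTopology M] [ConnectedSpace M] [I.Boundaryless]
    {E' : Type*} [NormedAddCommGroup E'] [NormedSpace ℝ E'] [FiniteDimensional ℝ E']
    {H' : Type*} [TopologicalSpace H'] {J : ModelWithCorners ℝ E' H'}
    {N : Type*} [TopologicalSpace N] [ChartedSpace H' N] [IsManifold J (⊤ : ℕ∞) N]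
    [T2Space N] [SecondCountableTopology N] [ConnectedSpace N] [J.Boundaryless]
    (hdim : Module.finrank ℝ E ≤ Module.finrank ℝ E')
    (i : M → N) (hi : ContMDiff I J (⊤ : ℕ∞) i)
    (himm : ∀ x : M, Function.Injective (mfderiv I J i x))
    (f : Diffeomorph I I M M (⊤ : ℕ∞)) (hf : ∀ x, i (f x) = i x)
    (U : Set M) (hUopen : IsOpen U) (hUconn : IsConnected U) (hUinj : Set.InjOn i U) :
    (f '' U) ∩ U = ∅ ∨ (f '' U = U ∧ ∀ x ∈ U, f x = x) := by
  rcases eq_empty_or_nonempty ((f '' U) ∩ U) with h | ⟨y, ⟨x0, hx0U, rfl⟩, hy⟩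
  · exact Or.inl h
  · right
    have hfix : ∀ x ∈ U, f x = x := by
      have hconn : PreconnectedSpace U := Subtype.preconnectedSpace hUconn.isPreconnected
      set s : Set U := {x : U | f ↑x = ↑x} with hs
      have hseq : s = Subtype.val ⁻¹' (⇑f ⁻¹' U) := by
        ext ⟨x, hxU⟩
        simp only [hs, mem_setOf_eq, mem_preimage]
        constructor
        · intro h; rw [h]; exact hxU
        · intro h; exact hUinj h hxU (hf x)
      have hopen : IsOpen s := by
        rw [hseq]
        exact (hUopen.preimage f.continuous).preimage continuous_subtype_val
      have hclosed : IsClosed s :=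
        isClosed_eq (f.continuous.comp continuous_subtype_val) continuous_subtype_val
      have hne : s.Nonempty := by
        refine ⟨⟨f x0, hy⟩, ?_⟩
        show f (f x0) = f x0
        exact congrArg f (hUinj hy hx0U (hf x0))
      have : s = univ := (isClopen_iff.mp ⟨hclosed, hopen⟩).resolve_left
        (fun h => hne.ne_empty h)
      intro x hxU
      exact (this ▸ mem_univ (⟨x, hxU⟩ : U) : (⟨x, hxU⟩ : U) ∈ s)
    refine ⟨?_, hfix⟩
    ext y
    constructor
    · rintro ⟨x, hxU, rfl⟩; rw [hfix x hxU]; exact hxU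
    · intro hyU; exact ⟨y, hyU, hfix y hyU⟩
end

section
/- There exists a free immersion $i : S^1 \to \mathbb{R}^2$ such that every point of $i(S^1)$ has at least two preimages. (For example, traversing one circle of a figure eight three times and the other circle twice yields such an immersion.) -/
open Function Set Metric
open scoped Manifold Topology ContDiff

local notation "𝕊¹" => Metric.sphere (0 : EuclideanSpace ℝ (Fin 2)) 1

noncomputable section
namespace Stmt3
open Real

abbrev E2 := EuclideanSpace ℝ (Fin 2)

/-- angular unit: one fifth of the half circle -/
notation "π5" => (π/5 : ℝ)

def uu (θ : ℝ) : E2 := WithLp.toLp 2 ![Real.cos θ, Real.sin θ]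

lemma uu_mem (θ : ℝ) : uu θ ∈ Metric.sphere (0:E2) 1 := by
  rw [mem_sphere_zero_iff_norm, EuclideanSpace.norm_eq]
  simp only [uu, PiLp.toLp_apply, Fin.sum_univ_two, Matrix.cons_val_zero, Matrix.cons_val_one, Matrix.head_cons]
  rw [← Real.sqrt_one]
  congr 1
  rw [Real.norm_eq_abs, Real.norm_eq_abs, sq_abs, sq_abs]
  nlinarith [Real.sin_sq_add_cos_sq θ]

def c (θ : ℝ) : 𝕊¹ := ⟨uu θ, uu_mem θ⟩

/-- the bump profile -/
def g (y : ℝ) : ℝ := expNegInvGlue (y - Real.cos (π/50))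

def P (θ : ℝ) : ℝ := g (Real.cos (θ - 3*π5)) + g (Real.cos (θ - 9*π5))

def F (v : E2) : E2 :=
  WithLp.toLp 2 ![1 - ((v 0)^5 - 10*((v 0)^3*(v 1)^2) + 5*((v 0)*(v 1)^4))
      + g ((v 0) * Real.cos (3*π5) + (v 1) * Real.sin (3*π5))
      + g ((v 0) * Real.cos (9*π5) + (v 1) * Real.sin (9*π5)),
    5*((v 0)^4*(v 1)) - 10*((v 0)^2*(v 1)^3) + (v 1)^5]

def imm (x : 𝕊¹) : E2 := F x.val

lemma cos_five (θ : ℝ) :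
    Real.cos (5*θ) = (cos θ)^5 - 10*(cos θ)^3*(sin θ)^2 + 5*(cos θ)*(sin θ)^4 := by
  have h : 5*θ = θ+θ+θ+θ+θ := by ring
  rw [h]; simp only [cos_add, sin_add]; ring

lemma sin_five (θ : ℝ) :
    Real.sin (5*θ) = 5*(cos θ)^4*(sin θ) - 10*(cos θ)^2*(sin θ)^3 + (sin θ)^5 := by
  have h : 5*θ = θ+θ+θ+θ+θ := by ring
  rw [h]; simp only [cos_add, sin_add]; ring

lemma F_uu (θ : ℝ) : F (uu θ) = WithLp.toLp 2 ![1 - Real.cos (5*θ) + P θ, Real.sin (5*θ)] := by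
  have h1 : cos θ * Real.cos (3*π5) + sin θ * Real.sin (3*π5) = Real.cos (θ - 3*π5) := by
    rw [Real.cos_sub]
  have h2 : cos θ * Real.cos (9*π5) + sin θ * Real.sin (9*π5) = Real.cos (θ - 9*π5) := by
    rw [Real.cos_sub]
  simp only [F, uu, PiLp.toLp_apply, Matrix.cons_val_zero, Matrix.cons_val_one, Matrix.head_cons, h1, h2,
    cos_five, sin_five, P]
  ring_nf

lemma uu_inj {θ θ' : ℝ} (h1 : Real.cos θ = Real.cos θ') (h2 : Real.sin θ = Real.sin θ') :
    ∃ n : ℤ, θ' = θ + n * (2*π) := by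
  have hc : Real.cos (θ' - θ) = 1 := by
    rw [cos_sub, ← h1, ← h2]; nlinarith [sin_sq_add_cos_sq θ]
  rw [Real.cos_eq_one_iff] at hc
  obtain ⟨n, hn⟩ := hc
  exact ⟨n, by linarith⟩

lemma uu_periodic (θ : ℝ) (n : ℤ) : uu (θ + n * (2*π)) = uu θ := by
  unfold uu
  have hc : Real.cos (θ + n * (2*π)) = Real.cos θ := by
    simpa [mul_comm] using (Real.cos_periodic.int_mul n) θ
  have hs : Real.sin (θ + n * (2*π)) = Real.sin θ := by
    simpa [mul_comm] using (Real.sin_periodic.int_mul n) θ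
  rw [hc, hs]

lemma c_eq_iff {θ θ' : ℝ} : c θ = c θ' ↔ ∃ n : ℤ, θ' = θ + n * (2*π) := by
  constructor
  · intro h
    have h' : uu θ = uu θ' := congrArg Subtype.val h
    have h0 : Real.cos θ = Real.cos θ' := congrArg (fun v : E2 => v 0) h'
    have h1 : Real.sin θ = Real.sin θ' := congrArg (fun v : E2 => v 1) h'
    exact uu_inj h0 h1
  · rintro ⟨n, rfl⟩
    apply Subtype.ext
    exact (uu_periodic θ n).symm

lemma c_apply (θ : ℝ) : (c θ : E2) = uu θ := rfl

lemma c_surj' (x : 𝕊¹) : ∃ θ : ℝ, c θ = x := by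
  obtain ⟨v, hv⟩ := x
  rw [mem_sphere_zero_iff_norm, EuclideanSpace.norm_eq] at hv
  have hsq : (v 0)^2 + (v 1)^2 = 1 := by
    have := congrArg (· ^ 2) hv
    simp only [Fin.sum_univ_two] at this
    rw [Real.sq_sqrt (by positivity)] at this
    simpa [sq_abs] using this
  have hv0 : v 0 ∈ Set.Icc (-1:ℝ) 1 := by
    constructor <;> nlinarith [sq_nonneg (v 1)]
  rcases le_or_gt 0 (v 1) with hpos | hneg
  · refine ⟨Real.arccos (v 0), ?_⟩
    apply Subtype.ext
    show uu _ = v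
    have hc : Real.cos (Real.arccos (v 0)) = v 0 := Real.cos_arccos hv0.1 hv0.2
    have hs : Real.sin (Real.arccos (v 0)) = Real.sqrt (1 - (v 0)^2) := Real.sin_arccos _
    have : Real.sqrt (1 - (v 0)^2) = v 1 := by
      rw [show 1 - (v 0)^2 = (v 1)^2 by linarith]
      exact Real.sqrt_sq hpos
    ext i
    fin_cases i <;> simp [uu, hc, hs, this]
  · refine ⟨-Real.arccos (v 0), ?_⟩
    apply Subtype.ext
    show uu _ = v
    have hc : Real.cos (-Real.arccos (v 0)) = v 0 := by
      rw [Real.cos_neg]; exact Real.cos_arccos hv0.1 hv0.2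
    have hs : Real.sin (-Real.arccos (v 0)) = -Real.sqrt (1 - (v 0)^2) := by
      rw [Real.sin_neg, Real.sin_arccos]
    have : Real.sqrt (1 - (v 0)^2) = -(v 1) := by
      rw [show 1 - (v 0)^2 = (-(v 1))^2 by ring_nf; linarith]
      exact Real.sqrt_sq (by linarith)
    ext i
    fin_cases i <;> simp [uu, hc, hs, this]

lemma c_surj (x : 𝕊¹) : ∃ θ ∈ Set.Ico (0:ℝ) (2*π), c θ = x := by
  obtain ⟨θ, hθ⟩ := c_surj' x
  have h2π : (0:ℝ) < 2*π := by positivity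
  refine ⟨θ - ⌊θ/(2*π)⌋ * (2*π), ⟨?_, ?_⟩, ?_⟩
  · have := Int.sub_floor_div_mul_nonneg θ h2π
    linarith
  · have := Int.sub_floor_div_mul_lt θ h2π
    linarith
  · rw [show θ - ⌊θ/(2*π)⌋ * (2*π) = θ + (-⌊θ/(2*π)⌋ : ℤ) * (2*π) by push_cast; ring]
    rw [← hθ]
    exact (c_eq_iff.mpr ⟨-⌊θ/(2*π)⌋, by push_cast; ring⟩).symm


/-! ### bump function lemmas -/

lemma g_nonneg (y : ℝ) : 0 ≤ g y := expNegInvGlue.nonneg _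

lemma g_eq_zero {y : ℝ} (h : y ≤ Real.cos (π/50)) : g y = 0 :=
  expNegInvGlue.zero_of_nonpos (by linarith)

lemma g_pos {y : ℝ} (h : Real.cos (π/50) < y) : 0 < g y :=
  expNegInvGlue.pos_of_pos (by linarith)

lemma P_nonneg (θ : ℝ) : 0 ≤ P θ := add_nonneg (g_nonneg _) (g_nonneg _)

lemma pi_pos' : (0:ℝ) < π := Real.pi_pos

/-- if `ψ` stays away from `0` within `[0, 2π]`, then `cos ψ ≤ cos (π/50)` -/
lemma cos_le_cos_of_between {ψ : ℝ} (h1 : π/50 ≤ ψ) (h2 : ψ ≤ 2*π - π/50) :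
    Real.cos ψ ≤ Real.cos (π/50) := by
  have hπ := pi_pos'
  rcases le_or_gt ψ π with h | h
  · exact Real.strictAntiOn_cos.antitoneOn ⟨by linarith, by linarith⟩
      ⟨by linarith, by linarith⟩ h1
  · have : Real.cos ψ = Real.cos (2*π - ψ) := by
      rw [Real.cos_sub, Real.cos_two_pi, Real.sin_two_pi]; ring
    rw [this]
    exact Real.strictAntiOn_cos.antitoneOn ⟨by linarith, by linarith⟩
      ⟨by linarith, by linarith⟩ (by linarith)

lemma cos_gt_iff (δ : ℝ) (a : ℝ) (ha0 : 0 < a) (haπ : a ≤ π) :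
    Real.cos a < Real.cos δ ↔ ∃ n : ℤ, |δ - n*(2*π)| < a := by
  have hπ := pi_pos'
  constructor
  · intro h
    refine ⟨round (δ/(2*π)), ?_⟩
    set n : ℤ := round (δ/(2*π)) with hn
    have hb : |δ/(2*π) - n| ≤ 1/2 := abs_sub_round _
    have hb' : |δ - n*(2*π)| ≤ π := by
      rw [abs_sub_comm] at hb
      rw [abs_sub_comm]
      have h' := abs_sub_le_iff.mp hb
      have hd : δ/(2*π)*(2*π) = δ := div_mul_cancel₀ _ (by positivity)
      rw [abs_sub_le_iff]
      constructor <;> nlinarith [h'.1, h'.2]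
    have hcos : Real.cos (δ - n*(2*π)) = Real.cos δ := by
      have := (Real.cos_periodic.int_mul n).sub_eq δ
      simpa [mul_comm] using this
    by_contra hcon
    push_neg at hcon
    have : Real.cos |δ - n*(2*π)| ≤ Real.cos a := by
      apply Real.strictAntiOn_cos.antitoneOn ⟨by linarith, haπ⟩
        ⟨abs_nonneg _, by linarith [hb']⟩ hcon
    rw [Real.cos_abs, hcos] at this
    linarith
  · rintro ⟨n, hn⟩
    have hcos : Real.cos (δ - n*(2*π)) = Real.cos δ := by
      have := (Real.cos_periodic.int_mul n).sub_eq δ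
      simpa [mul_comm] using this
    rw [← hcos, ← Real.cos_abs (δ - n*(2*π))]
    rcases eq_or_lt_of_le (abs_nonneg (δ - n*(2*π))) with h0 | h0
    · rw [← h0, Real.cos_zero]
      calc Real.cos a < Real.cos 0 :=
            Real.strictAntiOn_cos ⟨le_refl _, by linarith⟩ ⟨by linarith, haπ⟩ ha0
        _ = 1 := Real.cos_zero
    · exact Real.strictAntiOn_cos ⟨abs_nonneg _, by linarith⟩ ⟨by linarith, haπ⟩ hn


/-! ### vanishing of P -/

lemma cos_le_b {ψ : ℝ} (h1 : π/50 ≤ |ψ|) (h2 : |ψ| ≤ 2*π - π/50) :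
    Real.cos ψ ≤ Real.cos (π/50) := by
  rw [← Real.cos_abs]
  exact cos_le_cos_of_between h1 h2

lemma P_eq_zero' {θ : ℝ} (h1 : Real.cos (θ-3*π5) ≤ Real.cos (π/50))
    (h2 : Real.cos (θ-9*π5) ≤ Real.cos (π/50)) : P θ = 0 := by
  unfold P
  rw [g_eq_zero h1, g_eq_zero h2, add_zero]

lemma P_periodic (θ : ℝ) (n : ℤ) : P (θ + n*(2*π)) = P θ := by
  unfold P
  have h : ∀ m : ℝ, θ + n*(2*π) - m = (θ - m) + n*(2*π) := by intro m; ring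
  rw [h, h]
  congr 2
  · simpa [mul_comm] using (Real.cos_periodic.int_mul n) (θ - 3*π5)
  · simpa [mul_comm] using (Real.cos_periodic.int_mul n) (θ - 9*π5)

lemma cos_pi5_lt : Real.cos (π/5) < Real.cos (π/50) := by
  have hπ := pi_pos'
  exact Real.strictAntiOn_cos ⟨by linarith, by linarith⟩ ⟨by linarith, by linarith⟩ (by linarith)

lemma cos_odd {m : ℤ} (hm : Odd m) : Real.cos (m*π5) ≤ Real.cos (π/5) := by
  have hπ := pi_pos'
  have hdecomp : m = 10*(m/10) + m % 10 := (Int.mul_ediv_add_emod m 10).symm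
  set q := m / 10 with hq
  set r := m % 10 with hrdef
  have hr0 : 0 ≤ r := Int.emod_nonneg m (by norm_num)
  have hr10 : r < 10 := Int.emod_lt_of_pos m (by norm_num)
  have hodd : Odd r := by
    rcases hm with ⟨k, hk⟩
    exact ⟨k - 5*q, by omega⟩
  have hcast : (m:ℝ) = 10*(q:ℝ) + (r:ℝ) := by exact_mod_cast congrArg (fun z : ℤ => (z:ℝ)) hdecomp
  have hcos : Real.cos (m*π5) = Real.cos (r*π5) := by
    rw [show (m:ℝ)*π5 = r*π5 + q*(2*π) by rw [hcast]; ring]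
    simpa [mul_comm] using (Real.cos_periodic.int_mul q) ((r:ℝ)*π5)
  rw [hcos]
  have ha := Real.strictAntiOn_cos.antitoneOn
  have h1 : Real.cos (3*(π/5)) ≤ Real.cos (π/5) :=
    ha ⟨by linarith, by linarith⟩ ⟨by linarith, by linarith⟩ (by linarith)
  clear hcos hcast hdecomp
  interval_cases r
  · exact absurd hodd (by decide)
  · norm_num
  · exact absurd hodd (by decide)
  · push_cast; exact h1
  · exact absurd hodd (by decide)
  · have : ((5:ℤ):ℝ)*π5 = π := by push_cast; ring
    rw [this, Real.cos_pi]
    nlinarith [Real.neg_one_le_cos (π/5)]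
  · exact absurd hodd (by decide)
  · have : ((7:ℤ):ℝ)*π5 = 2*π - 3*(π/5) := by push_cast; ring
    rw [this, Real.cos_two_pi_sub]
    exact h1
  · exact absurd hodd (by decide)
  · have : ((9:ℤ):ℝ)*π5 = 2*π - π/5 := by push_cast; ring
    rw [this, Real.cos_two_pi_sub]

lemma P_junction (m : ℤ) : P (m*(2*π5)) = 0 := by
  apply P_eq_zero'
  · rw [show (m:ℝ)*(2*π5) - 3*π5 = ((2*m-3:ℤ):ℝ)*π5 by push_cast; ring]
    exact le_trans (cos_odd ⟨m-2, by ring⟩) cos_pi5_lt.le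
  · rw [show (m:ℝ)*(2*π5) - 9*π5 = ((2*m-9:ℤ):ℝ)*π5 by push_cast; ring]
    exact le_trans (cos_odd ⟨m-5, by ring⟩) cos_pi5_lt.le

lemma imm_c (θ : ℝ) : imm (c θ) = WithLp.toLp 2 ![1 - Real.cos (5*θ) + P θ, Real.sin (5*θ)] := F_uu θ

lemma imm_eq_zero_iff {θ : ℝ} :
    F (uu θ) = 0 ↔ ∃ m : ℤ, θ = m*(2*π5) := by
  rw [F_uu]
  constructor
  · intro h
    have h0 : 1 - Real.cos (5*θ) + P θ = 0 := by
      have := congrArg (fun v : E2 => v 0) h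
      simpa using this
    have hcos : Real.cos (5*θ) = 1 := by
      have := P_nonneg θ
      have := Real.cos_le_one (5*θ)
      linarith
    rw [Real.cos_eq_one_iff] at hcos
    obtain ⟨n, hn⟩ := hcos
    exact ⟨n, by linear_combination (-1/5 : ℝ) * hn⟩
  · rintro ⟨m, rfl⟩
    have h5 : (5:ℝ)*(m*(2*π5)) = m*(2*π) := by ring
    ext j
    fin_cases j
    · simp only [PiLp.toLp_apply, Matrix.cons_val_zero]
      rw [h5, P_junction]
      rw [show (m:ℝ)*(2*π) = 0 + m*(2*π) by ring]
      rw [show Real.cos (0 + m*(2*π)) = Real.cos 0 by simpa [mul_comm] using (Real.cos_periodic.int_mul m) 0]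
      simp
    · simp only [PiLp.toLp_apply, Matrix.cons_val_one, Matrix.head_cons]
      rw [h5]
      rw [show (m:ℝ)*(2*π) = 0 + m*(2*π) by ring]
      rw [show Real.sin (0 + m*(2*π)) = Real.sin 0 by simpa [mul_comm] using (Real.sin_periodic.int_mul m) 0]
      simp


/-! ### smoothness and immersion -/

lemma contDiff_g : ContDiff ℝ (↑(⊤:ℕ∞)) g :=
  expNegInvGlue.contDiff.comp (contDiff_id.sub contDiff_const)

lemma contDiff_F : ContDiff ℝ (↑(⊤:ℕ∞)) F := by
  rw [contDiff_euclidean]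
  intro i
  have h0 : ContDiff ℝ (↑(⊤:ℕ∞)) (fun v : E2 => v 0) := (EuclideanSpace.proj (0 : Fin 2) : E2 →L[ℝ] ℝ).contDiff
  have h1 : ContDiff ℝ (↑(⊤:ℕ∞)) (fun v : E2 => v 1) := (EuclideanSpace.proj (1 : Fin 2) : E2 →L[ℝ] ℝ).contDiff
  fin_cases i
  · show ContDiff ℝ (↑(⊤:ℕ∞)) (fun v : E2 => F v 0)
    have heq : (fun v : E2 => F v 0) = fun v : E2 =>
        1 - ((v 0)^5 - 10*((v 0)^3*(v 1)^2) + 5*((v 0)*(v 1)^4))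
        + g ((v 0) * Real.cos (3*π5) + (v 1) * Real.sin (3*π5))
        + g ((v 0) * Real.cos (9*π5) + (v 1) * Real.sin (9*π5)) := by
      funext v; simp [F]
    rw [heq]
    apply ContDiff.add
    apply ContDiff.add
    · apply ContDiff.sub contDiff_const
      apply ContDiff.add
      apply ContDiff.sub
      · exact h0.pow 5
      · exact (contDiff_const.mul ((h0.pow 3).mul (h1.pow 2)))
      · exact (contDiff_const.mul (h0.mul (h1.pow 4)))
    · exact contDiff_g.comp ((h0.mul contDiff_const).add (h1.mul contDiff_const))
    · exact contDiff_g.comp ((h0.mul contDiff_const).add (h1.mul contDiff_const))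
  · show ContDiff ℝ (↑(⊤:ℕ∞)) (fun v : E2 => F v 1)
    have heq : (fun v : E2 => F v 1) = fun v : E2 =>
        5*((v 0)^4*(v 1)) - 10*((v 0)^2*(v 1)^3) + (v 1)^5 := by
      funext v; simp [F]
    rw [heq]
    apply ContDiff.add
    apply ContDiff.sub
    · exact contDiff_const.mul ((h0.pow 4).mul h1)
    · exact contDiff_const.mul ((h0.pow 2).mul (h1.pow 3))
    · exact h1.pow 5

instance factE2 : Fact (Module.finrank ℝ E2 = 1 + 1) :=
  ⟨by simp [finrank_euclideanSpace_fin]⟩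

lemma contMDiff_imm : ContMDiff (𝓡 1) 𝓘(ℝ, E2) (⊤ : ℕ∞) imm := by
  have : imm = F ∘ (Subtype.val : 𝕊¹ → E2) := rfl
  rw [this]
  exact (contDiff_F.contMDiff).comp (contMDiff_coe_sphere (n := 1))

def rot (θ : ℝ) : E2 := WithLp.toLp 2 ![-(Real.sin θ), Real.cos θ]

lemma hasDerivAt_uu (θ : ℝ) : HasDerivAt uu (rot θ) θ := by
  have hw : HasDerivAt (fun t : ℝ => (![Real.cos t, Real.sin t] : Fin 2 → ℝ))
      (![-(Real.sin θ), Real.cos θ]) θ := by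
    rw [hasDerivAt_pi]
    intro i
    fin_cases i
    · simpa using Real.hasDerivAt_cos θ
    · simpa using Real.hasDerivAt_sin θ
  have := ((EuclideanSpace.equiv (Fin 2) ℝ).symm.toContinuousLinearMap.hasFDerivAt).comp_hasDerivAt θ hw
  exact this

lemma odd_far {m : ℤ} (hm : Odd m) {ε : ℝ} (hε : |ε| ≤ π/20) :
    Real.cos (m*(π/10) + ε) ≤ Real.cos (π/50) := by
  have hπ := pi_pos'
  have hdecomp : m = 20*(m/20) + m % 20 := (Int.mul_ediv_add_emod m 20).symm
  set q := m / 20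
  set r := m % 20 with hrdef
  have hr0 : 0 ≤ r := Int.emod_nonneg m (by norm_num)
  have hr20 : r < 20 := Int.emod_lt_of_pos m (by norm_num)
  have hodd : Odd r := by
    rcases hm with ⟨k, hk⟩
    exact ⟨k - 10*q, by omega⟩
  have hr1 : 1 ≤ r := by rcases hodd with ⟨k, hk⟩; omega
  have hr19 : r ≤ 19 := by rcases hodd with ⟨k, hk⟩; omega
  have hcast : (m:ℝ) = 20*(q:ℝ) + (r:ℝ) := by exact_mod_cast congrArg (fun z : ℤ => (z:ℝ)) hdecomp
  have hcos : Real.cos (m*(π/10) + ε) = Real.cos (r*(π/10) + ε) := by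
    rw [show (m:ℝ)*(π/10) + ε = (r*(π/10) + ε) + q*(2*π) by rw [hcast]; ring]
    simpa [mul_comm] using (Real.cos_periodic.int_mul q) ((r:ℝ)*(π/10) + ε)
  rw [hcos]
  have hr1' : (1:ℝ) ≤ (r:ℝ) := by exact_mod_cast hr1
  have hr19' : (r:ℝ) ≤ 19 := by exact_mod_cast hr19
  have habs := abs_le.mp hε
  apply cos_le_b
  · rw [le_abs]
    left
    nlinarith [habs.1]
  · rw [abs_le]
    constructor <;> nlinarith [habs.1, habs.2]

lemma P_near {t s : ℝ} {k : ℤ} (ht : t = (2*k+1)*(π/10)) (hs : |s - t| ≤ π/20) :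
    P s = 0 := by
  apply P_eq_zero'
  · rw [show s - 3*π5 = ((2*k-5:ℤ):ℝ)*(π/10) + (s - t) by rw [ht]; push_cast; ring]
    exact odd_far ⟨k-3, by ring⟩ hs
  · rw [show s - 9*π5 = ((2*k-17:ℤ):ℝ)*(π/10) + (s - t) by rw [ht]; push_cast; ring]
    exact odd_far ⟨k-9, by ring⟩ hs

lemma fderiv_F_rot_ne_zero (θ : ℝ) : fderiv ℝ F (uu θ) (rot θ) ≠ 0 := by
  have hπ := pi_pos'
  set D : E2 := fderiv ℝ F (uu θ) (rot θ) with hD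
  have hF : HasDerivAt (fun t => F (uu t)) D θ :=
    ((contDiff_F.differentiable (by simp)) (uu θ)).hasFDerivAt.comp_hasDerivAt θ (hasDerivAt_uu θ)
  have hmul : HasDerivAt (fun t : ℝ => 5*t) 5 θ := by
    simpa using (hasDerivAt_id θ).const_mul (5:ℝ)
  intro hzero
  have hD1 : HasDerivAt (fun t => F (uu t) 1) (D 1) θ := by
    have h := ((EuclideanSpace.proj (1 : Fin 2)).hasFDerivAt (x := F (uu θ))).comp_hasDerivAt θ hF
    exact h
  have hsin : HasDerivAt (fun t : ℝ => Real.sin (5*t)) (Real.cos (5*θ) * 5) θ :=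
    (Real.hasDerivAt_sin (5*θ)).comp θ hmul
  have heq1 : (fun t => F (uu t) 1) = fun t : ℝ => Real.sin (5*t) := by
    funext t; rw [F_uu]; simp
  rw [heq1] at hD1
  have hD1' : D 1 = Real.cos (5*θ) * 5 := hD1.unique hsin
  have hcos0 : Real.cos (5*θ) = 0 := by
    have : D 1 = 0 := by rw [hzero]; rfl
    rw [this] at hD1'
    linarith [mul_self_nonneg (Real.cos (5*θ))]
  -- now the first coordinate
  obtain ⟨k, hk⟩ := Real.cos_eq_zero_iff.mp hcos0
  have hθk : θ = (2*k+1)*(π/10) := by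
    have : (5:ℝ) ≠ 0 := by norm_num
    field_simp at hk ⊢
    linarith
  have hD0 : HasDerivAt (fun t => F (uu t) 0) (D 0) θ := by
    have h := ((EuclideanSpace.proj (0 : Fin 2)).hasFDerivAt (x := F (uu θ))).comp_hasDerivAt θ hF
    exact h
  have heq0 : ∀ t, F (uu t) 0 = 1 - Real.cos (5*t) + P t := by
    intro t; rw [F_uu]; simp
  have hevent : (fun t : ℝ => 1 - Real.cos (5*t)) =ᶠ[nhds θ] (fun t => F (uu t) 0) := by
    have hball : Metric.ball θ (π/20) ∈ nhds θ := Metric.ball_mem_nhds θ (by positivity)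
    filter_upwards [hball] with s hs
    rw [heq0 s, P_near hθk (le_of_lt (by simpa [Real.dist_eq] using hs)), add_zero]
  have hcos' : HasDerivAt (fun t : ℝ => 1 - Real.cos (5*t)) (Real.sin (5*θ) * 5) θ := by
    have h1 : HasDerivAt (fun t : ℝ => Real.cos (5*t)) (-Real.sin (5*θ) * 5) θ :=
      (Real.hasDerivAt_cos (5*θ)).comp θ hmul
    simpa using h1.const_sub (1:ℝ)
  have hD0' : HasDerivAt (fun t : ℝ => 1 - Real.cos (5*t)) (D 0) θ :=
    hD0.congr_of_eventuallyEq hevent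
  have : D 0 = Real.sin (5*θ) * 5 := hD0'.unique hcos'
  have hD00 : D 0 = 0 := by rw [hzero]; rfl
  rw [hD00] at this
  nlinarith [Real.sin_sq_add_cos_sq (5*θ)]

lemma imm_mfderiv_injective (x : 𝕊¹) :
    Function.Injective (mfderiv (𝓡 1) 𝓘(ℝ, E2) imm x) := by
  have hcomp : mfderiv (𝓡 1) 𝓘(ℝ, E2) imm x
      = (fderiv ℝ F x.val).comp (mfderiv (𝓡 1) 𝓘(ℝ, E2) (Subtype.val : 𝕊¹ → E2) x) := by
    have h1 : MDifferentiableAt 𝓘(ℝ, E2) 𝓘(ℝ, E2) F x.val :=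
      (contDiff_F.contMDiff x.val).mdifferentiableAt (by simp)
    have h2 : MDifferentiableAt (𝓡 1) 𝓘(ℝ, E2) (Subtype.val : 𝕊¹ → E2) x :=
      ((contMDiff_coe_sphere (n := 1) (m := 1)) x).mdifferentiableAt one_ne_zero
    have : imm = F ∘ (Subtype.val : 𝕊¹ → E2) := rfl
    rw [this, mfderiv_comp x h1 h2, mfderiv_eq_fderiv]; rfl
  have key : ∀ z, mfderiv (𝓡 1) 𝓘(ℝ, E2) imm x z = 0 → z = 0 := by
    intro z hz
    rw [hcomp] at hz
    have hz2 : (fderiv ℝ F x.val) ((mfderiv (𝓡 1) 𝓘(ℝ, E2) (Subtype.val : 𝕊¹ → E2) x) z) = 0 := hz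
    clear hz; rename' hz2 => hz
    set w : E2 := mfderiv (𝓡 1) 𝓘(ℝ, E2) (Subtype.val : 𝕊¹ → E2) x z with hwdef
    have hwrange : w ∈ (mfderiv (𝓡 1) 𝓘(ℝ, E2) (Subtype.val : 𝕊¹ → E2) x : TangentSpace (𝓡 1) x →L[ℝ] E2).range :=
      ⟨z, rfl⟩
    rw [range_mfderiv_coe_sphere x] at hwrange
    obtain ⟨θ, hθ⟩ := c_surj' x
    have hval : (x : E2) = uu θ := by rw [← hθ]; rfl
    have hperp : Real.cos θ * w 0 + Real.sin θ * w 1 = 0 := by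
      have hmem : (x:E2) ∈ Submodule.span ℝ {(x:E2)} := Submodule.mem_span_singleton_self _
      have := (Submodule.mem_orthogonal (Submodule.span ℝ {(x:E2)}) w).mp hwrange _ hmem
      rw [hval] at this
      simpa [PiLp.inner_apply, Fin.sum_univ_two, uu, RCLike.inner_apply, mul_comm] using this
    have hpyth : Real.sin θ ^ 2 + Real.cos θ ^ 2 = 1 := Real.sin_sq_add_cos_sq θ
    set l : ℝ := w 1 * Real.cos θ - w 0 * Real.sin θ with hl
    have hw : w = l • rot θ := by
      ext i
      fin_cases i
      · show w 0 = l * (rot θ 0)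
        simp only [rot, PiLp.toLp_apply, Matrix.cons_val_zero, hl]
        linear_combination (Real.cos θ) * hperp - (w 0) * hpyth
      · show w 1 = l * (rot θ 1)
        simp only [rot, PiLp.toLp_apply, Matrix.cons_val_one, Matrix.head_cons, Matrix.cons_val_zero, hl]
        linear_combination (Real.sin θ) * hperp - (w 1) * hpyth
    have hw0 : w = 0 := by
      rcases eq_or_ne l 0 with hl0 | hl0
      · rw [hw, hl0, zero_smul]
      · exfalso
        apply fderiv_F_rot_ne_zero θ
        have : fderiv ℝ F (uu θ) w = 0 := by rw [← hval]; exact hz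
        rw [hw, map_smul] at this
        rcases smul_eq_zero.mp this with h | h
        · exact absurd h hl0
        · exact h
    have hinj := mfderiv_coe_sphere_injective (n := 1) (E := E2) x
    apply hinj
    rw [← hwdef, hw0, map_zero]; rfl
  intro z1 z2 h
  have h0 : mfderiv (𝓡 1) 𝓘(ℝ, E2) imm x (z1 - z2) = 0 := by
    rw [map_sub, h, sub_self]
  have := key _ h0
  exact sub_eq_zero.mp this


/-! ### arcs and their images -/

def I5 (j : ℤ) : Set ℝ := Set.Ioo ((2*j)*π5) ((2*j+2)*π5)

def Vs (j : ℤ) : Set 𝕊¹ := {x | Real.cos (π/5) < inner ℝ ((x:E2)) (uu ((2*j+1)*π5))}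

lemma inner_uu (θ ψ : ℝ) : (inner ℝ (uu θ) (uu ψ) : ℝ) = Real.cos (θ - ψ) := by
  simp only [uu, PiLp.toLp_apply, PiLp.inner_apply, RCLike.inner_apply, conj_trivial, Fin.sum_univ_two,
    Matrix.cons_val_zero, Matrix.cons_val_one, Matrix.head_cons]
  rw [Real.cos_sub]; ring

lemma mem_Vs_iff {θ : ℝ} {j : ℤ} :
    c θ ∈ Vs j ↔ ∃ n : ℤ, |θ - (2*j+1)*π5 - n*(2*π)| < π/5 := by
  have hπ := pi_pos'
  unfold Vs
  rw [Set.mem_setOf_eq, c_apply, inner_uu]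
  exact cos_gt_iff _ _ (by linarith) (by linarith)

lemma Vs_open (j : ℤ) : IsOpen (Vs j) := by
  apply isOpen_lt continuous_const
  exact Continuous.inner continuous_subtype_val continuous_const

lemma continuous_uu : Continuous uu := by
  apply Continuous.comp (EuclideanSpace.equiv (Fin 2) ℝ).symm.continuous
  apply continuous_pi
  intro i
  fin_cases i
  · exact Real.continuous_cos
  · exact Real.continuous_sin

lemma continuous_c : Continuous c := Continuous.subtype_mk continuous_uu _

lemma Vs_eq_image (j : ℤ) : Vs j = c '' (I5 j) := by
  ext x
  constructor
  · intro hx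
    obtain ⟨θ, hθmem, hθ⟩ := c_surj x
    rw [← hθ] at hx
    obtain ⟨n, hn⟩ := mem_Vs_iff.mp hx
    refine ⟨θ - n*(2*π), ?_, ?_⟩
    · have := abs_lt.mp hn
      constructor
      · have hπ := pi_pos'
        nlinarith [this.1]
      · have hπ := pi_pos'
        nlinarith [this.2]
    · rw [← hθ]
      symm
      apply c_eq_iff.mpr
      exact ⟨-n, by push_cast; ring⟩
  · rintro ⟨θ, hθmem, rfl⟩
    apply mem_Vs_iff.mpr
    refine ⟨0, ?_⟩
    obtain ⟨h1, h2⟩ := hθmem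
    have hπ := pi_pos'
    rw [abs_lt]
    constructor
    · push_cast at h1 ⊢
      nlinarith
    · push_cast at h2 ⊢
      nlinarith

lemma Vs_connected (j : ℤ) : IsConnected (Vs j) := by
  rw [Vs_eq_image]
  apply IsConnected.image
  · apply isConnected_Ioo
    have hπ := pi_pos'
    have : ((2*j:ℤ):ℝ) < ((2*j+2:ℤ):ℝ) := by exact_mod_cast by omega
    push_cast at this ⊢
    nlinarith
  · exact continuous_c.continuousOn

lemma Vs_disjoint {j k : ℤ} (hj0 : 0 ≤ j) (hj4 : j ≤ 4) (hk0 : 0 ≤ k) (hk4 : k ≤ 4)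
    (hjk : j ≠ k) : Disjoint (Vs j) (Vs k) := by
  rw [Set.disjoint_left]
  intro x hxj hxk
  obtain ⟨θ, hθ⟩ := c_surj' x
  rw [← hθ] at hxj hxk
  obtain ⟨n, hn⟩ := mem_Vs_iff.mp hxj
  obtain ⟨n', hn'⟩ := mem_Vs_iff.mp hxk
  have h1 := abs_lt.mp hn
  have h2 := abs_lt.mp hn'
  have hπ := pi_pos'
  -- (2j+1)π5 + nπ·10/5 close to (2k+1)π5 + n'·10π5
  have key : |((2*j+1) - (2*k+1) + 10*(n - n') : ℤ)| < 2 := by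
    rw [abs_lt]
    constructor
    · have : ((2*(j:ℝ)+1) - (2*k+1) + 10*((n:ℝ) - n'))*(π/5) > -2*(π/5) := by
        push_cast
        nlinarith [h1.1, h1.2, h2.1, h2.2]
      have h5 : (0:ℝ) < π/5 := by linarith
      by_contra hcon
      push_neg at hcon
      have : ((2*(j:ℝ)+1) - (2*(k:ℝ)+1) + 10*((n:ℝ) - (n':ℝ))) ≤ -2 := by exact_mod_cast hcon
      nlinarith
    · have : ((2*(j:ℝ)+1) - (2*k+1) + 10*((n:ℝ) - n'))*(π/5) < 2*(π/5) := by
        push_cast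
        nlinarith [h1.1, h1.2, h2.1, h2.2]
      have h5 : (0:ℝ) < π/5 := by linarith
      by_contra hcon
      push_neg at hcon
      have : (2:ℝ) ≤ ((2*(j:ℝ)+1) - (2*(k:ℝ)+1) + 10*((n:ℝ) - (n':ℝ))) := by exact_mod_cast hcon
      nlinarith
  rw [abs_lt] at key
  omega

lemma imm_ne_zero_of_mem_I5 {θ : ℝ} {j : ℤ} (hθ : θ ∈ I5 j) : F (uu θ) ≠ 0 := by
  intro h
  obtain ⟨m, hm⟩ := imm_eq_zero_iff.mp h
  obtain ⟨h1, h2⟩ := hθ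
  have hπ := pi_pos'
  rw [hm] at h1 h2
  have hlt : (2*j:ℝ) < 2*m := by nlinarith
  have hgt : (2*m:ℝ) < 2*j+2 := by nlinarith
  have : (2*j:ℤ) < 2*m := by exact_mod_cast hlt
  have : (2*m:ℤ) < 2*j+2 := by exact_mod_cast hgt
  omega

lemma cover {x : 𝕊¹} (hx : imm x ≠ 0) : ∃ j : ℤ, 0 ≤ j ∧ j ≤ 4 ∧ x ∈ Vs j := by
  obtain ⟨θ, ⟨hθ0, hθ2π⟩, hθ⟩ := c_surj x
  have hπ := pi_pos'
  set j : ℤ := ⌊θ / (2*π5)⌋ with hj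
  have h5 : (0:ℝ) < 2*π5 := by linarith
  have hj0 : 0 ≤ j := by
    apply Int.floor_nonneg.mpr
    positivity
  have hj4 : j ≤ 4 := by
    have h55 : θ / (2*π5) < ((5:ℤ):ℝ) := by
      rw [div_lt_iff₀ h5]
      push_cast
      nlinarith
    have := Int.floor_lt.mpr h55
    omega
  have hfl1 : (j:ℝ) * (2*π5) ≤ θ := by
    have := Int.floor_le (θ / (2*π5))
    calc (j:ℝ) * (2*π5) ≤ (θ/(2*π5)) * (2*π5) := by nlinarith
    _ = θ := by field_simp
  have hfl2 : θ < ((j:ℝ)+1) * (2*π5) := by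
    have := Int.lt_floor_add_one (θ / (2*π5))
    calc θ = (θ/(2*π5)) * (2*π5) := by field_simp
    _ < ((j:ℝ)+1) * (2*π5) := by nlinarith
  have hne : θ ≠ (j:ℝ) * (2*π5) := by
    intro h
    apply hx
    rw [← hθ]
    show F (uu θ) = 0
    apply imm_eq_zero_iff.mpr ⟨j, h⟩
  refine ⟨j, hj0, hj4, ?_⟩
  rw [← hθ, Vs_eq_image]
  refine ⟨θ, ⟨?_, ?_⟩, rfl⟩
  · push_cast
    rcases lt_or_eq_of_le hfl1 with h | h
    · nlinarith
    · exact absurd h.symm hne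
  · push_cast
    nlinarith


/-! ### value analysis on arcs -/

lemma PA0 {θ : ℝ} (h : θ ∈ Set.Icc (0:ℝ) (2*π5)) : P θ = 0 := by
  have hπ := pi_pos'
  obtain ⟨h1, h2⟩ := h
  apply P_eq_zero'
  · apply cos_le_b
    · rw [le_abs]; right; linarith
    · rw [abs_le]; constructor <;> linarith
  · apply cos_le_b
    · rw [le_abs]; right; linarith
    · rw [abs_le]; constructor <;> linarith

lemma PA23 {θ : ℝ} (h : θ ∈ Set.Icc (4*π5) (8*π5)) : P θ = 0 := by
  have hπ := pi_pos'
  obtain ⟨h1, h2⟩ := h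
  apply P_eq_zero'
  · apply cos_le_b
    · rw [le_abs]; left; linarith
    · rw [abs_le]; constructor <;> linarith
  · apply cos_le_b
    · rw [le_abs]; right; linarith
    · rw [abs_le]; constructor <;> linarith

lemma PB_off {θ : ℝ} (h1 : 2*π5 ≤ θ) (h2 : θ ≤ 4*π5) (h3 : π/50 ≤ |θ - 3*π5|) : P θ = 0 := by
  have hπ := pi_pos'
  apply P_eq_zero'
  · apply cos_le_b h3
    rw [abs_le]; constructor <;> linarith
  · apply cos_le_b
    · rw [le_abs]; right; linarith
    · rw [abs_le]; constructor <;> linarith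

lemma P_term2_vanish {θ : ℝ} (h1 : 2*π5 ≤ θ) (h2 : θ ≤ 4*π5) :
    P θ = g (Real.cos (θ - 3*π5)) := by
  have hπ := pi_pos'
  unfold P
  have hz : g (Real.cos (θ - 9*π5)) = 0 := by
    apply g_eq_zero
    apply cos_le_b
    · rw [le_abs]; right; linarith
    · rw [abs_le]; constructor <;> linarith
  rw [hz, add_zero]

lemma P_shift {θ : ℝ} (h1 : 2*π5 ≤ θ) (h2 : θ ≤ 4*π5) : P (θ + 6*π5) = P θ := by
  have hπ := pi_pos'
  rw [P_term2_vanish h1 h2]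
  unfold P
  have e2 : θ + 6*π5 - 9*π5 = θ - 3*π5 := by ring
  rw [e2]
  have hzero : g (Real.cos (θ + 6*π5 - 3*π5)) = 0 := by
    apply g_eq_zero
    apply cos_le_b
    · rw [le_abs]; left; linarith
    · rw [abs_le]; constructor <;> linarith
  rw [hzero, zero_add]

lemma F_shift {θ : ℝ} (h1 : 2*π5 ≤ θ) (h2 : θ ≤ 4*π5) : F (uu (θ + 6*π5)) = F (uu θ) := by
  rw [F_uu, F_uu]
  have hc : Real.cos (5*(θ + 6*π5)) = Real.cos (5*θ) := by
    rw [show 5*(θ + 6*π5) = 5*θ + (3:ℤ)*(2*π) by push_cast; ring]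
    simpa [mul_comm] using (Real.cos_periodic.int_mul (3:ℤ)) (5*θ)
  have hs : Real.sin (5*(θ + 6*π5)) = Real.sin (5*θ) := by
    rw [show 5*(θ + 6*π5) = 5*θ + (3:ℤ)*(2*π) by push_cast; ring]
    simpa [mul_comm] using (Real.sin_periodic.int_mul (3:ℤ)) (5*θ)
  rw [hc, hs, P_shift h1 h2]

lemma P_mid_pos : 0 < P (3*π5) := by
  have hπ := pi_pos'
  have h1 : Real.cos ((3*π5) - 3*π5) = 1 := by norm_num
  have hcos : Real.cos (π/50) < 1 := by
    calc Real.cos (π/50) < Real.cos 0 :=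
      Real.strictAntiOn_cos ⟨by linarith, by linarith⟩ ⟨by linarith, by linarith⟩ (by linarith)
    _ = 1 := Real.cos_zero
  unfold P
  rw [h1]
  have := g_pos hcos
  have := g_nonneg (Real.cos (3*π5 - 9*π5))
  linarith

lemma shift_of_eq {θ θ' : ℝ} (hP : P θ = 0) (hP' : P θ' = 0)
    (h : F (uu θ) = F (uu θ')) : ∃ n : ℤ, θ' = θ + n*(2*π5) := by
  rw [F_uu, F_uu, hP, hP'] at h
  have h0 : Real.cos (5*θ) = Real.cos (5*θ') := by
    have := congrArg (fun v : E2 => v 0) h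
    simp only [PiLp.toLp_apply, Matrix.cons_val_zero] at this
    linarith
  have h1 : Real.sin (5*θ) = Real.sin (5*θ') := by
    have := congrArg (fun v : E2 => v 1) h
    simpa using this
  obtain ⟨n, hn⟩ := uu_inj h0 h1
  exact ⟨n, by linarith [hn]⟩

/-- the midpoint values -/
lemma F_midA {j : ℤ} (hj : j = 0 ∨ j = 2 ∨ j = 3) :
    F (uu ((2*j+1)*π5)) = (WithLp.toLp 2 ![2, 0] : E2) := by
  have hπ := pi_pos'
  have hP : P ((2*j+1)*π5) = 0 := by
    rcases hj with rfl | rfl | rfl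
    · apply PA0; push_cast; constructor <;> [linarith; linarith]
    · apply PA23; push_cast; constructor <;> [linarith; linarith]
    · apply PA23; push_cast; constructor <;> [linarith; linarith]
  rw [F_uu, hP]
  have hcos : Real.cos (5*((2*j+1)*π5)) = -1 := by
    rw [show 5*((2*(j:ℝ)+1)*π5) = π + j*(2*π) by push_cast; ring]
    rw [show Real.cos (π + (j:ℝ)*(2*π)) = Real.cos π by
      simpa [mul_comm] using (Real.cos_periodic.int_mul j) π]
    exact Real.cos_pi
  have hsin : Real.sin (5*((2*j+1)*π5)) = 0 := by
    rw [show 5*((2*(j:ℝ)+1)*π5) = π + j*(2*π) by push_cast; ring]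
    rw [show Real.sin (π + (j:ℝ)*(2*π)) = Real.sin π by
      simpa [mul_comm] using (Real.sin_periodic.int_mul j) π]
    exact Real.sin_pi
  rw [hcos, hsin]
  norm_num

lemma F_midB : F (uu (3*π5)) = WithLp.toLp 2 ![2 + P (3*π5), 0] := by
  have hπ := pi_pos'
  rw [F_uu]
  have hcos : Real.cos (5*(3*π5)) = -1 := by
    rw [show 5*(3*π5) = π + ((1:ℤ):ℝ)*(2*π) by push_cast; ring]
    rw [show Real.cos (π + ((1:ℤ):ℝ)*(2*π)) = Real.cos π by
      simpa [mul_comm] using (Real.cos_periodic.int_mul (1:ℤ)) π]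
    exact Real.cos_pi
  have hsin : Real.sin (5*(3*π5)) = 0 := by
    rw [show 5*(3*π5) = π + ((1:ℤ):ℝ)*(2*π) by push_cast; ring]
    rw [show Real.sin (π + ((1:ℤ):ℝ)*(2*π)) = Real.sin π by
      simpa [mul_comm] using (Real.sin_periodic.int_mul (1:ℤ)) π]
    exact Real.sin_pi
  rw [hcos, hsin]
  norm_num

/-- the value (2,0) is not attained on the open B-arc (2π/5, 4π/5) -/
lemma notB {θ : ℝ} (h1 : 2*π5 < θ) (h2 : θ < 4*π5) : F (uu θ) ≠ (WithLp.toLp 2 ![2, 0] : E2) := by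
  have hπ := pi_pos'
  intro h
  rw [F_uu] at h
  have hsin : Real.sin (5*θ) = 0 := by
    have := congrArg (fun v : E2 => v 1) h
    simpa using this
  rw [Real.sin_eq_zero_iff] at hsin
  obtain ⟨n, hn⟩ := hsin
  have hn3 : n = 3 := by
    have hlo : 2*π < (n:ℝ)*π := by nlinarith
    have hhi : (n:ℝ)*π < 4*π := by nlinarith
    have h2n : (2:ℝ) < n := by nlinarith
    have h4n : (n:ℝ) < 4 := by nlinarith
    have : (2:ℤ) < n := by exact_mod_cast h2n
    have : (n:ℤ) < 4 := by exact_mod_cast h4n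
    omega
  have hθ3 : θ = 3*π5 := by
    rw [hn3] at hn
    push_cast at hn
    linarith
  have h0 := congrArg (fun v : E2 => v 0) h
  simp only [PiLp.toLp_apply, Matrix.cons_val_zero] at h0
  rw [hθ3] at h0
  have : Real.cos (5*(3*π5)) = -1 := by
    rw [show 5*(3*π5) = π + ((1:ℤ):ℝ)*(2*π) by push_cast; ring]
    rw [show Real.cos (π + ((1:ℤ):ℝ)*(2*π)) = Real.cos π by
      simpa [mul_comm] using (Real.cos_periodic.int_mul (1:ℤ)) π]
    exact Real.cos_pi
  rw [this] at h0
  have := P_mid_pos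
  linarith

/-- the B-midpoint value is not attained at points where P vanishes -/
lemma notA {θ : ℝ} (hP : P θ = 0) : F (uu θ) ≠ WithLp.toLp 2 ![2 + P (3*π5), 0] := by
  intro h
  rw [F_uu, hP] at h
  have h0 := congrArg (fun v : E2 => v 0) h
  simp only [PiLp.toLp_apply, Matrix.cons_val_zero] at h0
  have := P_mid_pos
  have := Real.neg_one_le_cos (5*θ)
  linarith


lemma cos_zero_pin {x : ℝ} (hx : Real.cos x = 0) (h1 : 2*π < x) (h2 : x < 4*π) :
    x = 5*π/2 ∨ x = 7*π/2 := by
  have hπ := pi_pos'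
  obtain ⟨k, hk⟩ := Real.cos_eq_zero_iff.mp hx
  have hb1 : (4:ℝ) < 2*(k:ℝ)+1 := by nlinarith
  have hb2 : (2*(k:ℝ)+1) < 8 := by nlinarith
  have hk1 : (1:ℤ) < k := by
    have : (1:ℝ) < (k:ℝ) := by nlinarith
    exact_mod_cast this
  have hk2 : (k:ℤ) < 4 := by
    have : (k:ℝ) < 4 := by nlinarith
    exact_mod_cast this
  interval_cases k
  · left; rw [hk]; push_cast; ring
  · right; rw [hk]; push_cast; ring

set_option maxHeartbeats 2000000 in
lemma keyB {θ θ' : ℝ} (hθ : θ ∈ I5 1) (hθ' : θ' ∈ I5 1)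
    (h : F (uu θ) = F (uu θ')) : θ' = θ := by
  have hπ := pi_pos'
  obtain ⟨ht1, ht2⟩ := hθ
  obtain ⟨ht1', ht2'⟩ := hθ'
  push_cast at ht1 ht2 ht1' ht2'
  rw [F_uu, F_uu] at h
  have h0 : Real.cos (5*θ) - Real.cos (5*θ') = P θ - P θ' := by
    have := congrArg (fun v : E2 => v 0) h
    simp only [PiLp.toLp_apply, Matrix.cons_val_zero] at this
    linarith
  have h1 : Real.sin (5*θ) = Real.sin (5*θ') := by
    have := congrArg (fun v : E2 => v 1) h
    simpa using this
  have hprod : 2 * Real.sin ((5*θ - 5*θ')/2) * Real.cos ((5*θ + 5*θ')/2) = 0 := by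
    rw [← Real.sin_sub_sin]
    linarith
  rcases mul_eq_zero.mp hprod with hcase | hcase
  · rcases mul_eq_zero.mp hcase with h2 | hsin0
    · norm_num at h2
    · rw [Real.sin_eq_zero_iff] at hsin0
      obtain ⟨n, hn⟩ := hsin0
      have hn0 : n = 0 := by
        have hlo : -π < (n:ℝ)*π := by nlinarith
        have hhi : (n:ℝ)*π < π := by nlinarith
        have h1n : (-1:ℝ) < (n:ℝ) := by nlinarith
        have h2n : (n:ℝ) < 1 := by nlinarith
        have : (-1:ℤ) < n := by exact_mod_cast h1n
        have : (n:ℤ) < 1 := by exact_mod_cast h2n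
        omega
      rw [hn0] at hn
      push_cast at hn
      linarith
  · -- cos ((5θ+5θ')/2) = 0
    have hsum : 5*θ + 5*θ' = 5*π ∨ 5*θ + 5*θ' = 7*π := by
      have hx := cos_zero_pin hcase (by nlinarith) (by nlinarith)
      rcases hx with h' | h'
      · left; linarith
      · right; linarith
    have hcosneg : Real.cos (5*θ') = - Real.cos (5*θ) := by
      rcases hsum with h' | h'
      · rw [show 5*θ' = 5*π - 5*θ by linarith]
        rw [show 5*π - 5*θ = (π - 5*θ) + (2:ℤ)*(2*π) by push_cast; ring]
        rw [show Real.cos ((π - 5*θ) + (2:ℤ)*(2*π)) = Real.cos (π - 5*θ) by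
          simpa [mul_comm] using (Real.cos_periodic.int_mul (2:ℤ)) (π - 5*θ)]
        rw [Real.cos_pi_sub]
      · rw [show 5*θ' = 7*π - 5*θ by linarith]
        rw [show 7*π - 5*θ = (π - 5*θ) + (3:ℤ)*(2*π) by push_cast; ring]
        rw [show Real.cos ((π - 5*θ) + (3:ℤ)*(2*π)) = Real.cos (π - 5*θ) by
          simpa [mul_comm] using (Real.cos_periodic.int_mul (3:ℤ)) (π - 5*θ)]
        rw [Real.cos_pi_sub]
    have heq : 2 * Real.cos (5*θ) = P θ - P θ' := by
      rw [hcosneg] at h0; linarith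
    -- case split on which reflection
    rcases hsum with h5 | h7
    · -- θ' = π - θ, both in (2π/5, 3π/5)
      have hθ'v : θ' = 5*π5 - θ := by linarith
      have hθlt : θ < 3*π5 := by linarith
      rcases le_or_gt θ (3*π5 - π/50) with hS1 | hS2
      · have hPθ : P θ = 0 := PB_off (by linarith) (by linarith)
          (by rw [le_abs]; right; linarith)
        rcases le_or_gt (2*π5 + π/50) θ with hS1a | hS1b
        · have hPθ' : P θ' = 0 := PB_off (by linarith) (by linarith)
            (by rw [le_abs]; right; linarith)
          have hc0 : Real.cos (5*θ) = 0 := by rw [hPθ, hPθ'] at heq; linarith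
          have := cos_zero_pin hc0 (by nlinarith) (by nlinarith)
          rcases this with h' | h'
          · linarith
          · nlinarith
        · exfalso
          have hpos : 0 < Real.cos (5*θ) := by
            rw [show (5:ℝ)*θ = (5*θ - 2*π) + 2*π by ring, Real.cos_add_two_pi]
            apply Real.cos_pos_of_mem_Ioo
            constructor <;> nlinarith
          have := P_nonneg θ'
          rw [hPθ] at heq
          linarith
      · exfalso
        have hneg : Real.cos (5*θ) < 0 := by
          rw [show (5:ℝ)*θ = (5*θ - 2*π) + 2*π by ring, Real.cos_add_two_pi]
          apply Real.cos_neg_of_pi_div_two_lt_of_lt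
          · nlinarith
          · nlinarith
        have hPθ' : P θ' = 0 := PB_off (by linarith) (by linarith)
          (by rw [le_abs]; right; linarith)
        have := P_nonneg θ
        rw [hPθ'] at heq
        linarith
    · -- θ' = 7π/5 - θ, both in (3π/5, 4π/5)
      have hθ'v : θ' = 7*π5 - θ := by linarith
      have hθgt : 3*π5 < θ := by linarith
      rcases le_or_gt (3*π5 + π/50) θ with hS1 | hS2
      · have hPθ : P θ = 0 := PB_off (by linarith) (by linarith)
          (by rw [le_abs]; left; linarith)
        have hcnp : Real.cos (5*θ) ≤ 0 := by
          rw [hPθ] at heq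
          have := P_nonneg θ'
          linarith
        have h72 : 5*θ ≤ 7*π/2 := by
          by_contra hcon
          push_neg at hcon
          have : 0 < Real.cos (5*θ) := by
            rw [show (5:ℝ)*θ = (5*θ - 4*π) + 2*π + 2*π by ring,
              Real.cos_add_two_pi, Real.cos_add_two_pi]
            apply Real.cos_pos_of_mem_Ioo
            constructor <;> nlinarith
          linarith
        have hPθ' : P θ' = 0 := PB_off (by linarith) (by linarith)
          (by rw [le_abs]; left; nlinarith)
        have hc0 : Real.cos (5*θ) = 0 := by rw [hPθ, hPθ'] at heq; linarith
        have := cos_zero_pin hc0 (by nlinarith) (by nlinarith)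
        rcases this with h' | h'
        · nlinarith
        · linarith
      · exfalso
        have hneg : Real.cos (5*θ) < 0 := by
          rw [show (5:ℝ)*θ = (5*θ - 2*π) + 2*π by ring, Real.cos_add_two_pi]
          apply Real.cos_neg_of_pi_div_two_lt_of_lt
          · nlinarith
          · nlinarith
        have hPθ' : P θ' = 0 := PB_off (by linarith) (by linarith)
          (by rw [le_abs]; left; nlinarith)
        have := P_nonneg θ
        rw [hPθ'] at heq
        linarith


lemma hPA {j : ℤ} (hj : j = 0 ∨ j = 2 ∨ j = 3) : ∀ θ ∈ I5 j, P θ = 0 := by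
  intro θ hθ
  obtain ⟨h1, h2⟩ := hθ
  push_cast at h1 h2
  rcases hj with rfl | rfl | rfl
  · exact PA0 ⟨by linarith, by linarith⟩
  · exact PA23 ⟨by linarith, by linarith⟩
  · exact PA23 ⟨by linarith, by linarith⟩

lemma mid_mem {j : ℤ} : ((2*(j:ℝ)+1)*π5) ∈ I5 j := by
  have hπ := pi_pos'
  constructor
  · push_cast; nlinarith
  · push_cast; nlinarith

lemma rep_of_mem_Vs {f : 𝕊¹ → 𝕊¹} (hff : ∀ x, imm (f x) = imm x) {θ : ℝ} {k : ℤ}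
    (h : f (c θ) ∈ Vs k) : ∃ θ' ∈ I5 k, c θ' = f (c θ) ∧ F (uu θ') = F (uu θ) := by
  rw [Vs_eq_image] at h
  obtain ⟨θ', hθ', hc⟩ := h
  refine ⟨θ', hθ', hc, ?_⟩
  have := hff (c θ)
  rw [← hc] at this
  exact this

lemma normB {j : ℤ} (hj : j = 1 ∨ j = 4) {θ : ℝ} (hθ : θ ∈ I5 j) :
    (θ - 2*((j:ℝ)-1)*π5) ∈ I5 1 ∧ F (uu (θ - 2*((j:ℝ)-1)*π5)) = F (uu θ) := by
  have hπ := pi_pos'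
  obtain ⟨h1, h2⟩ := hθ
  push_cast at h1 h2
  rcases hj with rfl | rfl
  · constructor
    · push_cast
      constructor <;> [nlinarith; nlinarith]
    · norm_num
  · constructor
    · push_cast
      constructor <;> [nlinarith; nlinarith]
    · push_cast
      rw [show θ - 2*((4:ℝ)-1)*π5 = θ - 6*π5 by ring]
      rw [show θ = (θ - 6*π5) + 6*π5 by ring]
      rw [show θ - 6*π5 + 6*π5 - 6*π5 = θ - 6*π5 by ring]
      exact (F_shift (by nlinarith) (by nlinarith)).symm

lemma stepA {f : 𝕊¹ → 𝕊¹} (hff : ∀ x, imm (f x) = imm x) {j k : ℤ}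
    (hPj : ∀ θ ∈ I5 j, P θ = 0) (hPk : ∀ θ ∈ I5 k, P θ = 0)
    (hmap : ∀ θ ∈ I5 j, f (c θ) ∈ Vs k) :
    ∀ θ ∈ I5 j, f (c θ) = c (θ + 2*((k:ℝ)-j)*π5) := by
  intro θ hθ
  obtain ⟨θ', hθ', hc, hFF⟩ := rep_of_mem_Vs hff (hmap θ hθ)
  obtain ⟨n, hn⟩ := shift_of_eq (hPj θ hθ) (hPk θ' hθ') hFF.symm
  have hπ := pi_pos'
  obtain ⟨ha1, ha2⟩ := hθ
  obtain ⟨hb1, hb2⟩ := hθ'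
  push_cast at ha1 ha2 hb1 hb2
  have hn1 : ((k:ℝ)-j) - 1 < n := by nlinarith
  have hn2 : (n:ℝ) < ((k:ℝ)-j) + 1 := by nlinarith
  have : n = k - j := by
    have h1' : (k - j - 1 : ℤ) < n := by exact_mod_cast (by push_cast; linarith : ((k - j - 1:ℤ):ℝ) < n)
    have h2' : n < (k - j + 1 : ℤ) := by exact_mod_cast (by push_cast; linarith : ((n:ℤ):ℝ) < ((k - j + 1:ℤ):ℝ))
    omega
  rw [← hc, hn, this]
  congr 1
  push_cast
  ring

lemma stepB {f : 𝕊¹ → 𝕊¹} (hff : ∀ x, imm (f x) = imm x) {j k : ℤ}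
    (hj : j = 1 ∨ j = 4) (hk : k = 1 ∨ k = 4)
    (hmap : ∀ θ ∈ I5 j, f (c θ) ∈ Vs k) :
    ∀ θ ∈ I5 j, f (c θ) = c (θ + 2*((k:ℝ)-j)*π5) := by
  intro θ hθ
  obtain ⟨θ', hθ', hc, hFF⟩ := rep_of_mem_Vs hff (hmap θ hθ)
  obtain ⟨hmem, hFn⟩ := normB hj hθ
  obtain ⟨hmem', hFn'⟩ := normB hk hθ'
  have : θ' - 2*((k:ℝ)-1)*π5 = θ - 2*((j:ℝ)-1)*π5 := by
    apply keyB hmem hmem'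
    rw [hFn, hFn', hFF]
  rw [← hc]
  congr 1
  linarith

lemma stepAB {f : 𝕊¹ → 𝕊¹} (hff : ∀ x, imm (f x) = imm x) {j k : ℤ}
    (hj : j = 0 ∨ j = 2 ∨ j = 3) (hk : k = 1 ∨ k = 4)
    (hmap : ∀ θ ∈ I5 j, f (c θ) ∈ Vs k) : False := by
  obtain ⟨θ', hθ', hc, hFF⟩ := rep_of_mem_Vs hff (hmap _ (mid_mem (j := j)))
  rw [F_midA hj] at hFF
  obtain ⟨hmem', hFn'⟩ := normB hk hθ'
  have hπ := pi_pos'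
  obtain ⟨hm1, hm2⟩ := hmem'
  push_cast at hm1 hm2
  exact notB (θ := θ' - 2*((k:ℝ)-1)*π5) (by linarith) (by linarith)
    (by rw [hFn']; exact hFF)

lemma stepBA {f : 𝕊¹ → 𝕊¹} (hff : ∀ x, imm (f x) = imm x) {j k : ℤ}
    (hj : j = 1 ∨ j = 4) (hk : k = 0 ∨ k = 2 ∨ k = 3)
    (hmap : ∀ θ ∈ I5 j, f (c θ) ∈ Vs k) : False := by
  obtain ⟨θ', hθ', hc, hFF⟩ := rep_of_mem_Vs hff (hmap _ (mid_mem (j := j)))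
  have hmidB : F (uu ((2*(j:ℝ)+1)*π5)) = WithLp.toLp 2 ![2 + P (3*π5), 0] := by
    rcases hj with rfl | rfl
    · push_cast
      rw [show (2*(1:ℝ)+1)*π5 = 3*π5 by ring]
      exact F_midB
    · push_cast
      have hπ := pi_pos'
      rw [show (2*(4:ℝ)+1)*π5 = 3*π5 + 6*π5 by ring]
      rw [F_shift (by nlinarith) (by nlinarith)]
      exact F_midB
  rw [hmidB] at hFF
  exact notA (hPA hk θ' hθ') hFF

lemma master {f : 𝕊¹ → 𝕊¹} (hff : ∀ x, imm (f x) = imm x) {j k : ℤ}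
    (hj0 : 0 ≤ j) (hj4 : j ≤ 4) (hk0 : 0 ≤ k) (hk4 : k ≤ 4)
    (hmap : ∀ θ ∈ I5 j, f (c θ) ∈ Vs k) :
    ((j = 1 ∨ j = 4) ↔ (k = 1 ∨ k = 4)) ∧
      (∀ θ ∈ I5 j, f (c θ) = c (θ + 2*((k:ℝ)-j)*π5)) := by
  have hjc : (j = 1 ∨ j = 4) ∨ (j = 0 ∨ j = 2 ∨ j = 3) := by omega
  have hkc : (k = 1 ∨ k = 4) ∨ (k = 0 ∨ k = 2 ∨ k = 3) := by omega
  rcases hjc with hjB | hjA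
  · rcases hkc with hkB | hkA
    · exact ⟨by tauto, stepB hff hjB hkB hmap⟩
    · exact absurd (stepBA hff hjB hkA hmap) (by simp)
  · rcases hkc with hkB | hkA
    · exact absurd (stepAB hff hjA hkB hmap) (by simp)
    · refine ⟨by omega, stepA hff (hPA hjA) (hPA hkA) hmap⟩


lemma exists_k {f : 𝕊¹ → 𝕊¹} (hfc : Continuous f) (hff : ∀ x, imm (f x) = imm x)
    {j : ℤ} (hj0 : 0 ≤ j) (hj4 : j ≤ 4) :
    ∃ k : ℤ, 0 ≤ k ∧ k ≤ 4 ∧ ((j = 1 ∨ j = 4) ↔ (k = 1 ∨ k = 4)) ∧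
      ∀ θ ∈ Set.Icc ((2*(j:ℝ))*π5) ((2*(j:ℝ)+2)*π5), f (c θ) = c (θ + 2*((k:ℝ)-j)*π5) := by
  have hπ := pi_pos'
  have hx0 : c ((2*(j:ℝ)+1)*π5) ∈ Vs j := by
    rw [Vs_eq_image]; exact ⟨_, mid_mem, rfl⟩
  have himgne : ∀ x ∈ Vs j, imm (f x) ≠ 0 := by
    intro x hx
    rw [hff x]
    rw [Vs_eq_image] at hx
    obtain ⟨θ', hθ', rfl⟩ := hx
    exact imm_ne_zero_of_mem_I5 hθ'
  obtain ⟨k, hk0, hk4, hk⟩ := cover (himgne _ hx0)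
  refine ⟨k, hk0, hk4, ?_⟩
  have hsub : f '' (Vs j) ⊆ Vs k := by
    apply IsPreconnected.subset_left_of_subset_union (Vs_open k)
      (isOpen_biUnion (fun (m : ℤ) (_ : m ∈ {m : ℤ | (0 ≤ m ∧ m ≤ 4) ∧ m ≠ k}) => Vs_open m))
    · rw [Set.disjoint_left]
      intro x hxk hxv
      rw [Set.mem_iUnion₂] at hxv
      obtain ⟨m, ⟨⟨hm0, hm4⟩, hmne⟩, hxm⟩ := hxv
      exact Set.disjoint_left.mp (Vs_disjoint hk0 hk4 hm0 hm4 (Ne.symm hmne)) hxk hxm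
    · rintro y ⟨x, hx, rfl⟩
      obtain ⟨m, hm0, hm4, hym⟩ := cover (himgne x hx)
      by_cases hmk : m = k
      · left; rw [hmk] at hym; exact hym
      · right
        rw [Set.mem_iUnion₂]
        exact ⟨m, ⟨⟨hm0, hm4⟩, hmk⟩, hym⟩
    · exact ⟨f (c ((2*(j:ℝ)+1)*π5)), Set.mem_image_of_mem f hx0, hk⟩
    · exact ((Vs_connected j).image f hfc.continuousOn).isPreconnected
  have hmap : ∀ θ ∈ I5 j, f (c θ) ∈ Vs k := by
    intro θ hθ
    apply hsub
    refine ⟨c θ, ?_, rfl⟩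
    rw [Vs_eq_image]
    exact ⟨θ, hθ, rfl⟩
  obtain ⟨hiff, hform⟩ := master hff hj0 hj4 hk0 hk4 hmap
  refine ⟨hiff, ?_⟩
  have hcont1 : Continuous fun θ => f (c θ) := hfc.comp continuous_c
  have hcont2 : Continuous fun θ => c (θ + 2*((k:ℝ)-j)*π5) :=
    continuous_c.comp (continuous_id.add continuous_const)
  have heq : Set.EqOn (fun θ => f (c θ)) (fun θ => c (θ + 2*((k:ℝ)-j)*π5)) (I5 j) :=
    fun θ hθ => hform θ hθ
  have hcl := heq.closure hcont1 hcont2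
  have hab : ((2*(j:ℝ))*π5) < ((2*(j:ℝ)+2)*π5) := by nlinarith
  have hcls : closure (I5 j) = Set.Icc ((2*(j:ℝ))*π5) ((2*(j:ℝ)+2)*π5) := by
    unfold I5
    push_cast
    exact closure_Ioo (ne_of_lt hab)
  rw [hcls] at hcl
  exact fun θ hθ => hcl hθ

lemma c_eq_pin {a b : ℤ} (h : c ((a:ℝ)*π5) = c ((b:ℝ)*π5)) : ∃ n : ℤ, b = a + 10*n := by
  have hπ := pi_pos'
  obtain ⟨n, hn⟩ := c_eq_iff.mp h
  refine ⟨n, ?_⟩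
  have hr : ((b:ℝ)) = ((a:ℝ)) + 10*n := by
    have h5 : (π/5) ≠ 0 := by positivity
    have : ((b:ℝ))*π5 = ((a:ℝ) + 10*n)*π5 := by rw [hn]; ring
    exact mul_right_cancel₀ h5 this
  exact_mod_cast hr

lemma freeness {f : 𝕊¹ → 𝕊¹} (hfc : Continuous f) (hff : ∀ x, imm (f x) = imm x) :
    ∀ x, f x = x := by
  have hπ := pi_pos'
  obtain ⟨k0, hk00, hk04, hiff0, hform0⟩ := exists_k hfc hff (j := 0) (by norm_num) (by norm_num)
  obtain ⟨k1, hk10, hk14, hiff1, hform1⟩ := exists_k hfc hff (j := 1) (by norm_num) (by norm_num)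
  obtain ⟨k2, hk20, hk24, hiff2, hform2⟩ := exists_k hfc hff (j := 2) (by norm_num) (by norm_num)
  obtain ⟨k3, hk30, hk34, hiff3, hform3⟩ := exists_k hfc hff (j := 3) (by norm_num) (by norm_num)
  obtain ⟨k4, hk40, hk44, hiff4, hform4⟩ := exists_k hfc hff (j := 4) (by norm_num) (by norm_num)
  -- boundary relations
  have hrel : ∀ (j j' kj kj' : ℤ), j' = j + 1 →
      (∀ θ ∈ Set.Icc ((2*(j:ℝ))*π5) ((2*(j:ℝ)+2)*π5),
        f (c θ) = c (θ + 2*((kj:ℝ)-j)*π5)) →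
      (∀ θ ∈ Set.Icc ((2*(j':ℝ))*π5) ((2*(j':ℝ)+2)*π5),
        f (c θ) = c (θ + 2*((kj':ℝ)-j')*π5)) →
      ∃ n : ℤ, kj' = kj + 1 + 5*n := by
    intro j j' kj kj' hj' hA hB
    subst hj'
    have e1 : f (c ((2*(j:ℝ)+2)*π5)) = c (((2*kj+2 : ℤ):ℝ)*π5) := by
      rw [hA _ ⟨by nlinarith, le_refl _⟩]
      congr 1
      push_cast
      ring
    have e2 : f (c ((2*(j:ℝ)+2)*π5)) = c (((2*kj' : ℤ):ℝ)*π5) := by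
      have := hB ((2*((j+1:ℤ):ℝ))*π5) ⟨le_refl _, by push_cast; nlinarith⟩
      rw [show (2*((j+1:ℤ):ℝ))*π5 = (2*(j:ℝ)+2)*π5 by push_cast; ring] at this
      rw [this]
      congr 1
      push_cast
      ring
    obtain ⟨n, hn⟩ := c_eq_pin (e1.symm.trans e2)
    exact ⟨n, by omega⟩
  obtain ⟨n0, hn0⟩ := hrel 0 1 k0 k1 (by norm_num) hform0 hform1
  obtain ⟨n1, hn1⟩ := hrel 1 2 k1 k2 (by norm_num) hform1 hform2
  obtain ⟨n2, hn2⟩ := hrel 2 3 k2 k3 (by norm_num) hform2 hform3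
  obtain ⟨n3, hn3⟩ := hrel 3 4 k3 k4 (by norm_num) hform3 hform4
  -- wraparound
  have hwrap : ∃ n : ℤ, k0 = k4 + 1 + 5*n := by
    have e1 : f (c ((10:ℝ)*π5)) = c (((2*k4+2 : ℤ):ℝ)*π5) := by
      have := hform4 ((2*((4:ℤ):ℝ)+2)*π5) ⟨by push_cast; nlinarith, le_refl _⟩
      rw [show (2*((4:ℤ):ℝ)+2)*π5 = (10:ℝ)*π5 by push_cast; ring] at this
      rw [this]
      congr 1
      push_cast
      ring
    have e0 : f (c (0:ℝ)) = c (((2*k0 : ℤ):ℝ)*π5) := by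
      have := hform0 ((2*((0:ℤ):ℝ))*π5) ⟨le_refl _, by push_cast; nlinarith⟩
      rw [show (2*((0:ℤ):ℝ))*π5 = (0:ℝ) by push_cast; ring] at this
      rw [this]
      congr 1
      push_cast
      ring
    have hcc : c ((10:ℝ)*π5) = c (0:ℝ) := by
      symm
      apply c_eq_iff.mpr
      exact ⟨1, by push_cast; ring⟩
    rw [hcc, e0] at e1
    obtain ⟨n, hn⟩ := c_eq_pin e1
    exact ⟨-n, by omega⟩
  obtain ⟨n4, hn4⟩ := hwrap
  -- type constraints force k_j = j
  have hk0' : ¬(k0 = 1 ∨ k0 = 4) := by rw [← hiff0]; omega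
  have hk1' : (k1 = 1 ∨ k1 = 4) := by rw [← hiff1]; omega
  have hk2' : ¬(k2 = 1 ∨ k2 = 4) := by rw [← hiff2]; omega
  have hk3' : ¬(k3 = 1 ∨ k3 = 4) := by rw [← hiff3]; omega
  have hk4' : (k4 = 1 ∨ k4 = 4) := by rw [← hiff4]; omega
  have hk0e : k0 = 0 := by omega
  have hk1e : k1 = 1 := by omega
  have hk2e : k2 = 2 := by omega
  have hk3e : k3 = 3 := by omega
  have hk4e : k4 = 4 := by omega
  subst hk0e hk1e hk2e hk3e hk4e
  -- conclude
  intro x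
  obtain ⟨θ, ⟨hθ0, hθ2π⟩, rfl⟩ := c_surj x
  have h2π : 2*π = 10*π5 := by ring
  rcases le_or_gt θ (2*π5) with h | h
  · have hh := hform0 θ ⟨by push_cast; linarith, by push_cast; linarith⟩
    rw [hh]
    congr 1
    push_cast
    ring
  · rcases le_or_gt θ (4*π5) with h2 | h2
    · have hh := hform1 θ ⟨by push_cast; linarith, by push_cast; linarith⟩
      rw [hh]
      congr 1
      push_cast
      ring
    · rcases le_or_gt θ (6*π5) with h3 | h3
      · have hh := hform2 θ ⟨by push_cast; linarith, by push_cast; linarith⟩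
        rw [hh]
        congr 1
        push_cast
        ring
      · rcases le_or_gt θ (8*π5) with h4 | h4
        · have hh := hform3 θ ⟨by push_cast; linarith, by push_cast; linarith⟩
          rw [hh]
          congr 1
          push_cast
          ring
        · have hh := hform4 θ ⟨by push_cast; linarith, by push_cast; linarith⟩
          rw [hh]
          congr 1
          push_cast
          ring


lemma F_eq_A {θ θ' : ℝ} (hP : P θ = 0) (hP' : P θ' = 0) (m : ℤ) (h : θ' = θ + (2*m)*π5) :
    F (uu θ') = F (uu θ) := by
  rw [F_uu, F_uu, hP, hP']
  have hc : Real.cos (5*θ') = Real.cos (5*θ) := by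
    rw [h, show 5*(θ + (2*(m:ℝ))*π5) = 5*θ + m*(2*π) by push_cast; ring]
    simpa [mul_comm] using (Real.cos_periodic.int_mul m) (5*θ)
  have hs : Real.sin (5*θ') = Real.sin (5*θ) := by
    rw [h, show 5*(θ + (2*(m:ℝ))*π5) = 5*θ + m*(2*π) by push_cast; ring]
    simpa [mul_comm] using (Real.sin_periodic.int_mul m) (5*θ)
  rw [hc, hs]

lemma c_shift_ne {θ : ℝ} {a : ℤ} (ha : a % 10 ≠ 0) : c (θ + (a:ℝ)*π5) ≠ c θ := by
  intro h
  obtain ⟨n, hn⟩ := c_eq_iff.mp h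
  have hπ := pi_pos'
  have h5 : (π/5) ≠ 0 := by positivity
  have : ((a:ℝ) + 10*n)*π5 = 0*π5 := by push_cast at hn ⊢; linarith
  have h0 : (a:ℝ) + 10*n = 0 := mul_right_cancel₀ h5 this
  have : (a + 10*n : ℤ) = 0 := by exact_mod_cast h0
  omega

lemma two_preimages (x : 𝕊¹) : ∃ x' : 𝕊¹, x' ≠ x ∧ imm x' = imm x := by
  have hπ := pi_pos'
  obtain ⟨θ, ⟨hθ0, hθ2π⟩, rfl⟩ := c_surj x
  have h2π : 2*π = 10*π5 := by ring
  rcases le_or_gt θ (2*π5) with h | h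
  · refine ⟨c (θ + ((4:ℤ):ℝ)*π5), c_shift_ne (by decide), ?_⟩
    show F (uu (θ + ((4:ℤ):ℝ)*π5)) = F (uu θ)
    apply F_eq_A (PA0 ⟨by linarith, by linarith⟩)
      (PA23 ⟨by push_cast; linarith, by push_cast; linarith⟩) 2
    push_cast
    ring
  · rcases le_or_gt θ (4*π5) with h2 | h2
    · refine ⟨c (θ + ((6:ℤ):ℝ)*π5), c_shift_ne (by decide), ?_⟩
      show F (uu (θ + ((6:ℤ):ℝ)*π5)) = F (uu θ)
      rw [show θ + ((6:ℤ):ℝ)*π5 = θ + 6*π5 by push_cast; ring]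
      exact F_shift (by linarith) (by linarith)
    · rcases le_or_gt θ (6*π5) with h3 | h3
      · refine ⟨c (θ + ((-4:ℤ):ℝ)*π5), c_shift_ne (by decide), ?_⟩
        show F (uu (θ + ((-4:ℤ):ℝ)*π5)) = F (uu θ)
        apply F_eq_A (PA23 ⟨by linarith, by linarith⟩)
          (PA0 ⟨by push_cast; linarith, by push_cast; linarith⟩) (-2)
        push_cast
        ring
      · rcases le_or_gt θ (8*π5) with h4 | h4
        · refine ⟨c (θ + ((-2:ℤ):ℝ)*π5), c_shift_ne (by decide), ?_⟩
          show F (uu (θ + ((-2:ℤ):ℝ)*π5)) = F (uu θ)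
          apply F_eq_A (PA23 ⟨by linarith, by linarith⟩)
            (PA23 ⟨by push_cast; linarith, by push_cast; linarith⟩) (-1)
          push_cast
          ring
        · refine ⟨c (θ + ((-6:ℤ):ℝ)*π5), c_shift_ne (by decide), ?_⟩
          show F (uu (θ + ((-6:ℤ):ℝ)*π5)) = F (uu θ)
          have hsh := F_shift (θ := θ - 6*π5) (by linarith) (by linarith)
          rw [show (θ - 6*π5) + 6*π5 = θ by ring] at hsh
          rw [show θ + ((-6:ℤ):ℝ)*π5 = θ - 6*π5 by push_cast; ring]
          exact hsh.symm

end Stmt3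

/-- There exists a free immersion `i : S¹ → ℝ²` such that every point of the
image has at least two preimages (e.g. going three times around one circle of a figure eight
and twice around the other). -/
theorem stmt_3 :
    ∃ i : 𝕊¹ → EuclideanSpace ℝ (Fin 2),
      ContMDiff (𝓡 1) 𝓘(ℝ, EuclideanSpace ℝ (Fin 2)) (⊤ : ℕ∞) i ∧
      (∀ x : 𝕊¹, Function.Injective (mfderiv (𝓡 1) 𝓘(ℝ, EuclideanSpace ℝ (Fin 2)) i x)) ∧
      (∀ f : 𝕊¹ ≃ₘ⟮𝓡 1, 𝓡 1⟯ 𝕊¹, (∀ x, i (f x) = i x) → ∀ x, f x = x) ∧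
      (∀ x : 𝕊¹, ∃ x' : 𝕊¹, x' ≠ x ∧ i x' = i x) := by
  refine ⟨Stmt3.imm, Stmt3.contMDiff_imm, Stmt3.imm_mfderiv_injective, ?_, Stmt3.two_preimages⟩
  intro f hf
  exact Stmt3.freeness f.continuous hf
end
end

section
/- Let $i_1, i_2 : M \to N$ be proper immersions with $i_1(M) \ne i_2(M)$. Then there exist open subsets $\mathcal{V}, \mathcal{W}$ of the space of proper immersions (with the compact-open/Whitney $C^0$ topology), each saturated under the right action of $\mathrm{Diff}(M)$ by composition, with $i_1 \in \mathcal{V}$, $i_2 \in \mathcal{W}$, and $\mathcal{V} \cap \mathcal{W} = \emptyset$. In particular the orbits of $i_1$ and $i_2$ are distinct and separated in the quotient topology. -/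
open Function Set
open scoped Manifold Topology ContDiff

/-- The Whitney (graph) $C^0$-topology on the space of maps `M → N`: generated by the sets
of maps whose graph lies in a given open subset of `M × N`. -/
def whitneyC0Topology (M N : Type*) [TopologicalSpace M] [TopologicalSpace N] :
    TopologicalSpace (M → N) :=
  TopologicalSpace.generateFrom
    {S | ∃ U : Set (M × N), IsOpen U ∧ S = {f : M → N | ∀ x, (x, f x) ∈ U}}

/-- Two proper immersions with different images can be separated by disjoint
`Diff(M)`-saturated open (Whitney $C^0$) neighbourhoods in the space of proper immersions;
in particular their orbits are separated in the quotient topology. -/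
theorem stmt_4
    {E : Type*} [NormedAddCommGroup E] [NormedSpace ℝ E] [FiniteDimensional ℝ E]
    {H : Type*} [TopologicalSpace H] {I : ModelWithCorners ℝ E H}
    {M : Type*} [TopologicalSpace M] [ChartedSpace H M] [IsManifold I (⊤ : ℕ∞) M]
    [T2Space M] [SecondCountableTopology M] [ConnectedSpace M] [I.Boundaryless]
    {E' : Type*} [NormedAddCommGroup E'] [NormedSpace ℝ E'] [FiniteDimensional ℝ E']
    {H' : Type*} [TopologicalSpace H'] {J : ModelWithCorners ℝ E' H'}
    {N : Type*} [TopologicalSpace N] [ChartedSpace H' N] [IsManifold J (⊤ : ℕ∞) N]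
    [T2Space N] [SecondCountableTopology N] [ConnectedSpace N] [J.Boundaryless]
    (hdim : Module.finrank ℝ E ≤ Module.finrank ℝ E')
    (i₁ i₂ : M → N)
    (h₁ : ContMDiff I J (⊤ : ℕ∞) i₁) (h₁imm : ∀ x : M, Function.Injective (mfderiv I J i₁ x))
    (h₁prop : ∀ K : Set N, IsCompact K → IsCompact (i₁ ⁻¹' K))
    (h₂ : ContMDiff I J (⊤ : ℕ∞) i₂) (h₂imm : ∀ x : M, Function.Injective (mfderiv I J i₂ x))
    (h₂prop : ∀ K : Set N, IsCompact K → IsCompact (i₂ ⁻¹' K))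
    (him : Set.range i₁ ≠ Set.range i₂) :
    ∃ V W : Set (M → N),
      IsOpen[whitneyC0Topology M N] V ∧ IsOpen[whitneyC0Topology M N] W ∧
      (∀ j ∈ V, ∀ f : M ≃ₘ⟮I, I⟯ M, (j ∘ f) ∈ V) ∧
      (∀ j ∈ W, ∀ f : M ≃ₘ⟮I, I⟯ M, (j ∘ f) ∈ W) ∧
      i₁ ∈ V ∧ i₂ ∈ W ∧ V ∩ W = ∅ := by
  classical
  haveI : LocallyCompactSpace N := Manifold.locallyCompact_of_finiteDimensional J
  haveI : RegularSpace N := inferInstance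
  obtain ⟨x₀⟩ : Nonempty M := inferInstance
  -- A general construction: if `p ∈ range i` but `p ∉ range j` and `j` is proper, we can
  -- separate `i` (by "hits A") and `j` (by "lands in B").
  have key : ∀ (i j : M → N), Continuous j → (∀ K : Set N, IsCompact K → IsCompact (j ⁻¹' K)) →
      ∀ p : N, p ∈ range i → p ∉ range j →
      ∃ V W : Set (M → N),
        IsOpen[whitneyC0Topology M N] V ∧ IsOpen[whitneyC0Topology M N] W ∧
        (∀ g ∈ V, ∀ f : M ≃ₘ⟮I, I⟯ M, (g ∘ f) ∈ V) ∧
        (∀ g ∈ W, ∀ f : M ≃ₘ⟮I, I⟯ M, (g ∘ f) ∈ W) ∧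
        i ∈ V ∧ j ∈ W ∧ V ∩ W = ∅ := by
    intro i j hjc hjp p hpi hpj
    -- `range j` is closed since `j` is proper
    have hproper : IsProperMap j := isProperMap_iff_isCompact_preimage.mpr ⟨hjc, fun K hK => hjp K hK⟩
    have hclosed : IsClosed (range j) := hproper.isClosedMap.isClosed_range
    -- separate `p` from `range j` by disjoint open sets
    have hsep : SeparatedNhds ({p} : Set N) (range j) := by
      rw [separatedNhds_iff_disjoint, nhdsSet_singleton, disjoint_nhds_nhdsSet]
      rwa [hclosed.closure_eq]
    obtain ⟨A, B, hA, hB, hpA, hjB, hAB⟩ := hsep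
    rw [singleton_subset_iff] at hpA
    -- V : maps hitting A;  W : maps landing in B
    refine ⟨{f | ∃ x, f x ∈ A}, {f | ∀ x, f x ∈ B}, ?_, ?_, ?_, ?_, ?_, ?_, ?_⟩
    · have : {f : M → N | ∃ x, f x ∈ A} = ⋃ x : M, {f : M → N | f x ∈ A} := by
        ext f; simp [mem_iUnion]
      rw [this]
      refine TopologicalSpace.GenerateOpen.sUnion _ ?_
      rintro S ⟨x, rfl⟩
      refine TopologicalSpace.GenerateOpen.basic _ ⟨({x}ᶜ ×ˢ univ) ∪ (univ ×ˢ A), ?_, ?_⟩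
      · exact (isOpen_compl_singleton.prod isOpen_univ).union (isOpen_univ.prod hA)
      · ext f
        constructor
        · intro hf y
          by_cases hy : y = x
          · subst hy; exact Or.inr ⟨mem_univ _, hf⟩
          · exact Or.inl ⟨hy, mem_univ _⟩
        · intro hf
          rcases hf x with h | h
          · exact absurd rfl h.1
          · exact h.2
    · refine TopologicalSpace.GenerateOpen.basic _ ⟨univ ×ˢ B, isOpen_univ.prod hB, ?_⟩
      ext f; simp
    · rintro g ⟨x, hx⟩ f
      exact ⟨f.symm x, by simpa using hx⟩
    · intro g hg f x
      exact hg (f x)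
    · obtain ⟨x, hx⟩ := hpi
      exact ⟨x, hx ▸ hpA⟩
    · intro x
      exact hjB ⟨x, rfl⟩
    · ext f
      simp only [mem_inter_iff, mem_setOf_eq, mem_empty_iff_false, iff_false, not_and]
      rintro ⟨x, hx⟩ hf
      exact hAB.ne_of_mem hx (hf x) rfl
  -- Now use that the ranges differ
  have : (∃ p, p ∈ range i₁ ∧ p ∉ range i₂) ∨ (∃ p, p ∈ range i₂ ∧ p ∉ range i₁) := by
    by_contra h
    push_neg at h
    exact him (Subset.antisymm h.1 h.2)
  rcases this with ⟨p, hp₁, hp₂⟩ | ⟨p, hp₂, hp₁⟩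
  · obtain ⟨V, W, hV, hW, hVs, hWs, h1V, h2W, hVW⟩ :=
      key i₁ i₂ h₂.continuous h₂prop p hp₁ hp₂
    exact ⟨V, W, hV, hW, hVs, hWs, h1V, h2W, hVW⟩
  · obtain ⟨V, W, hV, hW, hVs, hWs, h2V, h1W, hVW⟩ :=
      key i₂ i₁ h₁.continuous h₁prop p hp₂ hp₁
    exact ⟨W, V, hW, hV, hWs, hVs, h1W, h2V, by rw [inter_comm]; exact hVW⟩
end

section
/- Let $i_1, i_2 : M \to N$ be proper immersions with equal images $i_1(M) = i_2(M) = L$ and suppose the counting functions $\delta_1, \delta_2 : L \to \mathbb{N}$ (where $\delta_k(y) = \#i_k^{-1}(y)$) satisfy $\delta_1 \ne \delta_2$. Then the $\mathrm{Diff}(M)$-orbits of $i_1$ and $i_2$ are distinct and can be separated by disjoint $\mathrm{Diff}(M)$-saturated open neighborhoods in the space of proper immersions with the Whitney $C^0$ topology. -/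
open Function Set
open scoped Manifold Topology ContDiff

namespace Stmt8Aux

variable {M N : Type*} [TopologicalSpace M] [TopologicalSpace N]

lemma isOpen_gen {U : Set (M × N)} (hU : IsOpen U) :
    IsOpen[whitneyC0Topology M N] {f : M → N | ∀ x, (x, f x) ∈ U} :=
  TopologicalSpace.isOpen_generateFrom_of_mem ⟨U, hU, rfl⟩

lemma continuous_comp_homeo (φ : M ≃ₜ M) :
    Continuous[whitneyC0Topology M N, whitneyC0Topology M N] fun g : M → N => g ∘ φ := by
  show Continuous[whitneyC0Topology M N, TopologicalSpace.generateFrom _] fun g : M → N => g ∘ φ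
  rw [continuous_generateFrom_iff]
  rintro s ⟨U, hU, rfl⟩
  have h : (fun g : M → N => g ∘ φ) ⁻¹' {f | ∀ x, (x, f x) ∈ U}
      = {g : M → N | ∀ z, (z, g z) ∈ (fun p : M × N => (φ.symm p.1, p.2)) ⁻¹' U} := by
    ext g
    constructor
    · intro h z
      have := h (φ.symm z)
      simpa using this
    · intro h x
      have := h (φ x)
      simpa using this
  rw [h]
  exact isOpen_gen (hU.preimage ((φ.symm.continuous.comp continuous_fst).prodMk continuous_snd))

lemma comp_mem_interior {S : Set (M → N)}
    (hS : ∀ g ∈ S, ∀ φ : M ≃ₜ M, g ∘ φ ∈ S) {g₀ : M → N}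
    (hg : g₀ ∈ @interior _ (whitneyC0Topology M N) S) (φ : M ≃ₜ M) :
    g₀ ∘ φ ∈ @interior _ (whitneyC0Topology M N) S := by
  letI : TopologicalSpace (M → N) := whitneyC0Topology M N
  have h1 : IsOpen ((fun g : M → N => g ∘ φ.symm) ⁻¹' interior S) :=
    (continuous_comp_homeo φ.symm).isOpen_preimage _ isOpen_interior
  have h2 : ((fun g : M → N => g ∘ φ.symm) ⁻¹' interior S) ⊆ S := by
    intro g hgm
    have h3 : g ∘ φ.symm ∈ S := interior_subset hgm
    have h4 := hS _ h3 φ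
    have h5 : (g ∘ φ.symm) ∘ φ = g := by ext z; simp
    rwa [h5] at h4
  have h6 : g₀ ∘ φ ∈ (fun g : M → N => g ∘ φ.symm) ⁻¹' interior S := by
    show (g₀ ∘ φ) ∘ ⇑φ.symm ∈ interior S
    have h7 : (g₀ ∘ φ) ∘ ⇑φ.symm = g₀ := by ext z; simp
    rw [h7]; exact hg
  exact interior_maximal h2 h1 h6

lemma shrink [LocallyCompactSpace N] [T2Space N] {f : M → N} (hf : Continuous f)
    (hprop : ∀ K : Set N, IsCompact K → IsCompact (f ⁻¹' K)) {y : N} {A : Set M}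
    (hA : IsOpen A) (hfib : f ⁻¹' {y} ⊆ A) {B : Set N} (hB : IsOpen B) (hyB : y ∈ B) :
    ∃ V : Set N, IsOpen V ∧ y ∈ V ∧ closure V ⊆ B ∧ f ⁻¹' closure V ⊆ A := by
  obtain ⟨K₀, hK₀c, hyK₀, hK₀B⟩ := exists_compact_subset hB hyB
  have hCc : IsCompact (f ⁻¹' K₀ \ A) := (hprop _ hK₀c).diff hA
  have himc : IsClosed (f '' (f ⁻¹' K₀ \ A)) := (hCc.image hf).isClosed
  have hynot : y ∉ f '' (f ⁻¹' K₀ \ A) := by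
    rintro ⟨x, ⟨-, hx2⟩, rfl⟩
    exact hx2 (hfib rfl)
  have hopen : IsOpen (interior K₀ ∩ (f '' (f ⁻¹' K₀ \ A))ᶜ) :=
    isOpen_interior.inter himc.isOpen_compl
  obtain ⟨K, hKc, hyK, hKsub⟩ := exists_compact_subset hopen ⟨hyK₀, hynot⟩
  have hclK : closure (interior K) ⊆ K := closure_minimal interior_subset hKc.isClosed
  refine ⟨interior K, isOpen_interior, hyK, ?_, ?_⟩
  · exact hclK.trans ((hKsub.trans inter_subset_left).trans (interior_subset.trans hK₀B))
  · intro x hx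
    have hfx : f x ∈ K := hclK hx
    have h2 := hKsub hfx
    by_contra hxA
    have hxK₀ : f x ∈ K₀ := interior_subset h2.1
    exact h2.2 ⟨x, ⟨hxK₀, hxA⟩, rfl⟩

lemma key [T2Space M] [LocallyCompactSpace M] [LocallyConnectedSpace M]
    [T2Space N] [LocallyCompactSpace N]
    {i j : M → N} (hi : Continuous i) (hj : Continuous j)
    (hiprop : ∀ K : Set N, IsCompact K → IsCompact (i ⁻¹' K))
    (hjprop : ∀ K : Set N, IsCompact K → IsCompact (j ⁻¹' K))
    {y : N} (hFi : (i ⁻¹' {y}).Finite) (hFj : (j ⁻¹' {y}).Finite)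
    (hlt : Nat.card (i ⁻¹' {y}) < Nat.card (j ⁻¹' {y})) :
    ∃ V W : Set (M → N),
      IsOpen[whitneyC0Topology M N] V ∧ IsOpen[whitneyC0Topology M N] W ∧
      (∀ g ∈ V, ∀ φ : M ≃ₜ M, g ∘ φ ∈ V) ∧
      (∀ g ∈ W, ∀ φ : M ≃ₜ M, g ∘ φ ∈ W) ∧
      i ∈ V ∧ j ∈ W ∧ V ∩ W = ∅ := by
  classical
  letI : TopologicalSpace (M → N) := whitneyC0Topology M N
  haveI := hFi.to_subtype
  haveI := hFj.to_subtype
  obtain ⟨Ui, hUi, hUidisj⟩ := hFi.t2_separation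
  obtain ⟨Uj, hUj, hUjdisj⟩ := hFj.t2_separation
  obtain ⟨B, hBopen, hyB, -, hjpre⟩ :=
    shrink hj hjprop (isOpen_biUnion fun q (_ : q ∈ j ⁻¹' {y}) => (hUj q).2)
      (fun q hq => mem_biUnion hq (hUj q).1) isOpen_univ (mem_univ y)
  have hC : ∀ p : M, ∃ C : Set M, IsOpen C ∧ IsPreconnected C ∧
      (p ∈ i ⁻¹' {y} → p ∈ C ∧ closure C ⊆ Ui p ∧ ∀ w ∈ closure C, i w ∈ B) := by
    intro p
    by_cases hp : p ∈ i ⁻¹' {y}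
    · have hpo : IsOpen (Ui p ∩ i ⁻¹' B) := (hUi p).2.inter (hBopen.preimage hi)
      have hpy : i p = y := hp
      have hpm : p ∈ Ui p ∩ i ⁻¹' B := ⟨(hUi p).1, by
        simp only [mem_preimage, hpy]; exact hyB⟩
      obtain ⟨K, hKc, hpK, hKsub⟩ := exists_compact_subset hpo hpm
      have hclo : closure (connectedComponentIn (interior K) p) ⊆ Ui p ∩ i ⁻¹' B := by
        refine (closure_mono (connectedComponentIn_subset _ _)).trans ?_
        exact (closure_minimal interior_subset hKc.isClosed).trans hKsub
      exact ⟨connectedComponentIn (interior K) p, isOpen_interior.connectedComponentIn,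
        isPreconnected_connectedComponentIn,
        fun _ => ⟨mem_connectedComponentIn hpK, hclo.trans inter_subset_left,
          fun w hw => (hclo hw).2⟩⟩
    · exact ⟨∅, isOpen_empty, isPreconnected_empty, fun h => absurd h hp⟩
  choose C hCo hCc hCspec using hC
  obtain ⟨B'', hB''open, hyB'', -, hipre⟩ :=
    shrink hi hiprop (isOpen_biUnion fun p (_ : p ∈ i ⁻¹' {y}) => hCo p)
      (fun p hp => mem_biUnion hp (hCspec p hp).1) hBopen hyB
  set n := Nat.card (j ⁻¹' {y}) with hn
  set W₀ : Set (M → N) := {g | ∃ x : Fin n → M, (∀ k, g (x k) ∈ B'') ∧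
      ∀ k l, k ≠ l → ∀ S : Set M, IsPreconnected S → S ⊆ g ⁻¹' B →
        x k ∈ S → x l ∈ S → False} with hW₀
  have hW₀inv : ∀ g ∈ W₀, ∀ φ : M ≃ₜ M, g ∘ φ ∈ W₀ := by
    rintro g ⟨x, hx1, hx2⟩ φ
    refine ⟨fun k => φ.symm (x k), fun k => by simpa using hx1 k, ?_⟩
    intro k l hkl S hSc hSsub hkS hlS
    refine hx2 k l hkl (φ '' S) (hSc.image _ φ.continuous.continuousOn) ?_ ?_ ?_
    · rintro _ ⟨w, hw, rfl⟩
      exact hSsub hw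
    · exact ⟨_, hkS, by simp⟩
    · exact ⟨_, hlS, by simp⟩
  have hW₀cinv : ∀ g ∈ W₀ᶜ, ∀ φ : M ≃ₜ M, g ∘ φ ∈ W₀ᶜ := by
    intro g hg φ hmem
    apply hg
    have h1 := hW₀inv _ hmem φ.symm
    have h2 : (g ∘ φ) ∘ ⇑φ.symm = g := by ext z; simp
    rwa [h2] at h1
  -- the open neighbourhood of `i`
  set CB : Set M := ⋃ p ∈ i ⁻¹' {y}, closure (C p) with hCB
  have hCBc : IsClosed CB := hFi.isClosed_biUnion fun p _ => isClosed_closure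
  set O1 : Set (M → N) :=
      {g : M → N | ∀ x, (x, g x) ∈ (univ ×ˢ B ∪ CBᶜ ×ˢ univ : Set (M × N))} ∩
      {g : M → N | ∀ x, (x, g x) ∈
        ((⋃ p ∈ i ⁻¹' {y}, C p) ×ˢ univ ∪ univ ×ˢ (closure B'')ᶜ : Set (M × N))} with hO1
  have hO1a : IsOpen {g : M → N | ∀ x, (x, g x) ∈ (univ ×ˢ B ∪ CBᶜ ×ˢ univ : Set (M × N))} :=
    isOpen_gen ((isOpen_univ.prod hBopen).union (hCBc.isOpen_compl.prod isOpen_univ))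
  have hO1b : IsOpen {g : M → N | ∀ x, (x, g x) ∈
      ((⋃ p ∈ i ⁻¹' {y}, C p) ×ˢ univ ∪ univ ×ˢ (closure B'')ᶜ : Set (M × N))} :=
    isOpen_gen (((isOpen_biUnion fun p _ => hCo p).prod isOpen_univ).union
      (isOpen_univ.prod isClosed_closure.isOpen_compl))
  have hO1open : IsOpen O1 := hO1a.inter hO1b
  have hiO1 : i ∈ O1 := by
    constructor
    · intro x
      by_cases hx : x ∈ CB
      · refine Or.inl ⟨mem_univ x, ?_⟩
        simp only [hCB, mem_iUnion, exists_prop] at hx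
        obtain ⟨p, hp, hxp⟩ := hx
        exact (hCspec p hp).2.2 x hxp
      · exact Or.inr ⟨hx, mem_univ _⟩
    · intro x
      by_cases hx : i x ∈ closure B''
      · exact Or.inl ⟨hipre hx, mem_univ _⟩
      · exact Or.inr ⟨mem_univ _, hx⟩
  have hO1sub : O1 ⊆ W₀ᶜ := by
    rintro g ⟨hga, hgb⟩ ⟨x, hx1, hx2⟩
    have hxk : ∀ k, ∃ p, p ∈ i ⁻¹' {y} ∧ x k ∈ C p := by
      intro k
      rcases hgb (x k) with h | h
      · have h1 := h.1
        simpa only [mem_iUnion, exists_prop] using h1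
      · exact absurd (show g (x k) ∈ closure B'' from subset_closure (hx1 k)) h.2
    choose p hp hxp using hxk
    haveI : Fintype (i ⁻¹' {y}) := hFi.fintype
    have hcard : Fintype.card (i ⁻¹' {y}) < Fintype.card (Fin n) := by
      rw [Fintype.card_fin, ← Nat.card_eq_fintype_card]
      exact hlt
    obtain ⟨k, l, hkl, hpe⟩ := Fintype.exists_ne_map_eq_of_card_lt
      (fun k : Fin n => (⟨p k, hp k⟩ : (i ⁻¹' {y}))) hcard
    have hpkl : p k = p l := by simpa using congrArg Subtype.val hpe
    refine hx2 k l hkl (C (p k)) (hCc _) ?_ (hxp k) (by rw [hpkl]; exact hxp l)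
    intro w hw
    have hwCB : w ∈ CB := mem_biUnion (hp k) (subset_closure hw)
    rcases hga w with h | h
    · exact h.2
    · exact absurd hwCB h.1
  -- the open neighbourhood of `j`
  set O2 : Set (M → N) :=
      {g : M → N | ∀ x, (x, g x) ∈
        ((⋃ q ∈ j ⁻¹' {y}, Uj q ×ˢ B'') ∪ (j ⁻¹' {y})ᶜ ×ˢ univ : Set (M × N))} ∩
      {g : M → N | ∀ x, (x, g x) ∈
        ((⋃ q ∈ j ⁻¹' {y}, Uj q) ×ˢ univ ∪ univ ×ˢ (closure B)ᶜ : Set (M × N))} with hO2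
  have hO2a : IsOpen {g : M → N | ∀ x, (x, g x) ∈
      ((⋃ q ∈ j ⁻¹' {y}, Uj q ×ˢ B'') ∪ (j ⁻¹' {y})ᶜ ×ˢ univ : Set (M × N))} :=
    isOpen_gen ((isOpen_biUnion fun q _ => (hUj q).2.prod hB''open).union
      (hFj.isClosed.isOpen_compl.prod isOpen_univ))
  have hO2b : IsOpen {g : M → N | ∀ x, (x, g x) ∈
      ((⋃ q ∈ j ⁻¹' {y}, Uj q) ×ˢ univ ∪ univ ×ˢ (closure B)ᶜ : Set (M × N))} :=
    isOpen_gen (((isOpen_biUnion fun q _ => (hUj q).2).prod isOpen_univ).union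
      (isOpen_univ.prod isClosed_closure.isOpen_compl))
  have hO2open : IsOpen O2 := hO2a.inter hO2b
  have hjO2 : j ∈ O2 := by
    constructor
    · intro x
      by_cases hx : x ∈ j ⁻¹' {y}
      · have hxy : j x = y := hx
        exact Or.inl (mem_biUnion hx ⟨(hUj x).1, by simp only [hxy]; exact hyB''⟩)
      · exact Or.inr ⟨hx, mem_univ _⟩
    · intro x
      by_cases hx : j x ∈ closure B
      · exact Or.inl ⟨hjpre hx, mem_univ _⟩
      · exact Or.inr ⟨mem_univ _, hx⟩
  have hO2sub : O2 ⊆ W₀ := by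
    rintro g ⟨hga, hgb⟩
    let e : Fin n ≃ (j ⁻¹' {y}) := (Finite.equivFinOfCardEq hn.symm).symm
    refine ⟨fun k => ((e k : (j ⁻¹' {y})) : M), fun k => ?_, ?_⟩
    · rcases hga ((e k : (j ⁻¹' {y})) : M) with h | h
      · simp only [mem_iUnion, exists_prop] at h
        obtain ⟨q, hq, hmem⟩ := h
        exact hmem.2
      · exact absurd (e k).2 h.1
    · intro k l hkl S hSc hSsub hkS hlS
      have hSsub2 : S ⊆ ⋃ q ∈ j ⁻¹' {y}, Uj q := by
        intro w hw
        rcases hgb w with h | h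
        · exact h.1
        · exact absurd (show g w ∈ closure B from subset_closure (hSsub hw)) h.2
      have hne : ((e k : (j ⁻¹' {y})) : M) ≠ ((e l : (j ⁻¹' {y})) : M) :=
        fun hcoe => hkl (e.injective (Subtype.ext hcoe))
      obtain ⟨w, hwS, hw1, hw2⟩ :=
        hSc (Uj ((e k : (j ⁻¹' {y})) : M))
          (⋃ q ∈ (j ⁻¹' {y}) \ {((e k : (j ⁻¹' {y})) : M)}, Uj q)
          (hUj _).2 (isOpen_biUnion fun q _ => (hUj q).2)
          (fun w hw => by
            obtain ⟨q, hq, hwq⟩ : ∃ q, q ∈ j ⁻¹' {y} ∧ w ∈ Uj q := by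
              simpa only [mem_iUnion, exists_prop] using hSsub2 hw
            by_cases hqe : q = ((e k : (j ⁻¹' {y})) : M)
            · exact Or.inl (hqe ▸ hwq)
            · exact Or.inr (mem_biUnion (show q ∈ (j ⁻¹' {y}) \ {((e k : (j ⁻¹' {y})) : M)} from
                ⟨hq, fun hmem => hqe (mem_singleton_iff.mp hmem)⟩) hwq))
          ⟨_, hkS, (hUj _).1⟩
          ⟨_, hlS, mem_biUnion (show ((e l : (j ⁻¹' {y})) : M) ∈ (j ⁻¹' {y}) \ {((e k : (j ⁻¹' {y})) : M)} from
            ⟨(e l).2, fun hmem => hne (mem_singleton_iff.mp hmem).symm⟩) (hUj _).1⟩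
      obtain ⟨q, hq, hwq⟩ : ∃ q, q ∈ (j ⁻¹' {y}) \ {((e k : (j ⁻¹' {y})) : M)} ∧ w ∈ Uj q := by
        simpa only [mem_iUnion, exists_prop] using hw2
      have hdisj := hUjdisj (e k).2 hq.1 (fun h => hq.2 (mem_singleton_iff.mpr h.symm))
      exact absurd hw1 (Set.disjoint_right.mp hdisj hwq)
  refine ⟨interior W₀ᶜ, interior W₀, isOpen_interior, isOpen_interior,
    fun g hg φ => comp_mem_interior hW₀cinv hg φ,
    fun g hg φ => comp_mem_interior hW₀inv hg φ,
    interior_maximal hO1sub hO1open hiO1,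
    interior_maximal hO2sub hO2open hjO2, ?_⟩
  refine eq_empty_iff_forall_notMem.mpr fun g hg => ?_
  exact (interior_subset hg.1) (interior_subset hg.2)

lemma loc_inj {E : Type*} [NormedAddCommGroup E] [NormedSpace ℝ E] [FiniteDimensional ℝ E]
    {H : Type*} [TopologicalSpace H] {I : ModelWithCorners ℝ E H}
    {M : Type*} [TopologicalSpace M] [ChartedSpace H M] [IsManifold I (⊤ : ℕ∞) M]
    [I.Boundaryless]
    {E' : Type*} [NormedAddCommGroup E'] [NormedSpace ℝ E']
    {H' : Type*} [TopologicalSpace H'] {J : ModelWithCorners ℝ E' H'}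
    {N : Type*} [TopologicalSpace N] [ChartedSpace H' N] [IsManifold J (⊤ : ℕ∞) N]
    [J.Boundaryless]
    {f : M → N} (hf : ContMDiff I J (⊤ : ℕ∞) f) {x : M}
    (hinj : Function.Injective (mfderiv I J f x)) :
    ∃ u ∈ 𝓝 x, Set.InjOn f u := by
  have hmd : MDifferentiableAt I J f x := (hf x).mdifferentiableAt (by simp)
  set g : E → E' := ↑(extChartAt J (f x)) ∘ f ∘ ↑(extChartAt I x).symm with hgdef
  have hgc : ContDiffAt ℝ ((⊤ : ℕ∞) : WithTop ℕ∞) g (extChartAt I x x) := by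
    have h1 := (contMDiffAt_iff.mp (hf x)).2
    rwa [I.range_eq_univ, contDiffWithinAt_univ] at h1
  have hfd : mfderiv I J f x = fderiv ℝ g (extChartAt I x x) := by
    rw [hmd.mfderiv, I.range_eq_univ, fderivWithin_univ]
    rfl
  have hst : HasStrictFDerivAt g (fderiv ℝ g (extChartAt I x x)) (extChartAt I x x) :=
    hgc.hasStrictFDerivAt (by simp)
  have hinj' : Function.Injective (fderiv ℝ g (extChartAt I x x)) := by
    rw [← hfd]; exact hinj
  obtain ⟨K, hK0, hK⟩ := LinearMap.exists_antilipschitzWith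
    (fderiv ℝ g (extChartAt I x x)).toLinearMap (LinearMap.ker_eq_bot.mpr hinj')
  have hc : (0 : NNReal) < K⁻¹ / 2 := by
    rw [pos_iff_ne_zero]
    simp [div_eq_zero_iff, inv_eq_zero, hK0.ne']
  obtain ⟨s, hs, happ⟩ := hst.approximates_deriv_on_nhds (Or.inr hc)
  have Kpos : (0 : ℝ) < K := hK0
  have hginj : InjOn g s := by
    intro a ha b hb hab
    have h1 := happ a ha b hb
    rw [hab, sub_self, zero_sub, norm_neg] at h1
    have hcast : ((K⁻¹ / 2 : NNReal) : ℝ) = (K : ℝ)⁻¹ / 2 := by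
      rw [NNReal.coe_div, NNReal.coe_inv]
      norm_num
    have h1' : ‖(fderiv ℝ g (extChartAt I x x)) (a - b)‖ ≤ (K : ℝ)⁻¹ / 2 * ‖a - b‖ := by
      rw [← hcast]; exact h1
    have h2 : ‖a - b‖ ≤ (K : ℝ) * ‖(fderiv ℝ g (extChartAt I x x)) (a - b)‖ := by
      have h3 := hK.le_mul_dist a b
      rw [dist_eq_norm, dist_eq_norm] at h3
      simpa only [← map_sub, ContinuousLinearMap.coe_coe] using h3
    have hKK : (K : ℝ) * (K : ℝ)⁻¹ = 1 := mul_inv_cancel₀ (ne_of_gt Kpos)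
    have h6 : ‖a - b‖ ≤ 0 := by
      nlinarith [mul_le_mul_of_nonneg_left h1' (le_of_lt Kpos), norm_nonneg (a - b)]
    have h7 : a - b = 0 := norm_eq_zero.mp (le_antisymm h6 (norm_nonneg _))
    exact sub_eq_zero.mp h7
  have h7 : (extChartAt I x) ⁻¹' s ∈ 𝓝 x := (continuousAt_extChartAt x).preimage_mem_nhds hs
  refine ⟨(extChartAt I x).source ∩ (extChartAt I x) ⁻¹' s,
    Filter.inter_mem (extChartAt_source_mem_nhds x) h7, ?_⟩
  rintro a ⟨ha1, ha2⟩ b ⟨hb1, hb2⟩ hab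
  have hgab : g (extChartAt I x a) = g (extChartAt I x b) := by
    simp only [hgdef, comp_apply]
    rw [(extChartAt I x).left_inv ha1, (extChartAt I x).left_inv hb1, hab]
  have heq := hginj ha2 hb2 hgab
  have heq2 := congrArg (extChartAt I x).symm heq
  rwa [(extChartAt I x).left_inv ha1, (extChartAt I x).left_inv hb1] at heq2

lemma fiber_finite {M N : Type*} [TopologicalSpace M] [TopologicalSpace N] {f : M → N}
    (hprop : ∀ K : Set N, IsCompact K → IsCompact (f ⁻¹' K))
    (hloc : ∀ x : M, ∃ u ∈ 𝓝 x, Set.InjOn f u) (y : N) : (f ⁻¹' {y}).Finite := by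
  have hc : IsCompact (f ⁻¹' {y}) := hprop _ isCompact_singleton
  have hd : DiscreteTopology (f ⁻¹' {y}) := by
    rw [discreteTopology_subtype_iff]
    intro x hx
    obtain ⟨u, hu, hinj⟩ := hloc x
    refine Filter.empty_mem_iff_bot.mp ?_
    have h1 : u ∈ 𝓝[≠] x := nhdsWithin_le_nhds hu
    have h2 : u ∩ {x}ᶜ ∈ 𝓝[≠] x := Filter.inter_mem h1 self_mem_nhdsWithin
    have h3 : (u ∩ {x}ᶜ) ∩ (f ⁻¹' {y}) ∈ 𝓝[≠] x ⊓ Filter.principal (f ⁻¹' {y}) :=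
      Filter.inter_mem_inf h2 (Filter.mem_principal_self _)
    have h4 : (u ∩ {x}ᶜ) ∩ (f ⁻¹' {y}) = ∅ := by
      ext w
      simp only [mem_inter_iff, mem_compl_iff, mem_singleton_iff, mem_preimage, mem_empty_iff_false,
        iff_false, not_and, and_imp]
      intro hwu hwx hwy
      exact hwx (hinj hwu (mem_of_mem_nhds hu) (by rw [hwy, hx]))
    rwa [h4] at h3
  exact hc.finite (isDiscrete_iff_discreteTopology.mpr hd)

end Stmt8Aux

/-- Two proper immersions with the same image but different counting functions
`δ₁ ≠ δ₂` have distinct `Diff(M)`-orbits, which can be separated by disjoint saturated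
Whitney $C^0$-open neighbourhoods in the space of proper immersions. -/
theorem stmt_8
    {E : Type*} [NormedAddCommGroup E] [NormedSpace ℝ E] [FiniteDimensional ℝ E]
    {H : Type*} [TopologicalSpace H] {I : ModelWithCorners ℝ E H}
    {M : Type*} [TopologicalSpace M] [ChartedSpace H M] [IsManifold I (⊤ : ℕ∞) M]
    [T2Space M] [SecondCountableTopology M] [ConnectedSpace M] [I.Boundaryless]
    {E' : Type*} [NormedAddCommGroup E'] [NormedSpace ℝ E'] [FiniteDimensional ℝ E']
    {H' : Type*} [TopologicalSpace H'] {J : ModelWithCorners ℝ E' H'}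
    {N : Type*} [TopologicalSpace N] [ChartedSpace H' N] [IsManifold J (⊤ : ℕ∞) N]
    [T2Space N] [SecondCountableTopology N] [ConnectedSpace N] [J.Boundaryless]
    (hdim : Module.finrank ℝ E ≤ Module.finrank ℝ E')
    (i₁ i₂ : M → N)
    (h₁ : ContMDiff I J (⊤ : ℕ∞) i₁) (h₁imm : ∀ x : M, Function.Injective (mfderiv I J i₁ x))
    (h₁prop : ∀ K : Set N, IsCompact K → IsCompact (i₁ ⁻¹' K))
    (h₂ : ContMDiff I J (⊤ : ℕ∞) i₂) (h₂imm : ∀ x : M, Function.Injective (mfderiv I J i₂ x))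
    (h₂prop : ∀ K : Set N, IsCompact K → IsCompact (i₂ ⁻¹' K))
    (him : Set.range i₁ = Set.range i₂)
    (hδ : ∃ y ∈ Set.range i₁, Nat.card (i₁ ⁻¹' {y}) ≠ Nat.card (i₂ ⁻¹' {y})) :
    ∃ V W : Set (M → N),
      IsOpen[whitneyC0Topology M N] V ∧ IsOpen[whitneyC0Topology M N] W ∧
      (∀ j ∈ V, ∀ f : M ≃ₘ⟮I, I⟯ M, (j ∘ f) ∈ V) ∧
      (∀ j ∈ W, ∀ f : M ≃ₘ⟮I, I⟯ M, (j ∘ f) ∈ W) ∧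
      i₁ ∈ V ∧ i₂ ∈ W ∧ V ∩ W = ∅ := by
  haveI : LocallyCompactSpace M := by
    haveI := I.locallyCompactSpace
    exact ChartedSpace.locallyCompactSpace H M
  haveI : LocallyCompactSpace N := by
    haveI := J.locallyCompactSpace
    exact ChartedSpace.locallyCompactSpace H' N
  haveI : LocallyConnectedSpace M := by
    haveI : LocallyConnectedSpace H := I.toHomeomorph.locallyConnectedSpace
    exact ChartedSpace.locallyConnectedSpace H M
  obtain ⟨y, -, hne⟩ := hδ
  have hf1 : (i₁ ⁻¹' {y}).Finite :=
    Stmt8Aux.fiber_finite h₁prop (fun x => Stmt8Aux.loc_inj h₁ (h₁imm x)) y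
  have hf2 : (i₂ ⁻¹' {y}).Finite :=
    Stmt8Aux.fiber_finite h₂prop (fun x => Stmt8Aux.loc_inj h₂ (h₂imm x)) y
  rcases hne.lt_or_gt with hlt | hlt
  · obtain ⟨V, W, h1, h2, h3, h4, h5, h6, h7⟩ :=
      Stmt8Aux.key h₁.continuous h₂.continuous h₁prop h₂prop hf1 hf2 hlt
    exact ⟨V, W, h1, h2, fun g hg f => h3 g hg f.toHomeomorph,
      fun g hg f => h4 g hg f.toHomeomorph, h5, h6, h7⟩
  · obtain ⟨V, W, h1, h2, h3, h4, h5, h6, h7⟩ :=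
      Stmt8Aux.key h₂.continuous h₁.continuous h₂prop h₁prop hf2 hf1 hlt
    exact ⟨W, V, h2, h1, fun g hg f => h4 g hg f.toHomeomorph,
      fun g hg f => h3 g hg f.toHomeomorph, h6, h5, by rw [Set.inter_comm]; exact h7⟩
end

section
/- Let $i : M \to N$ be an immersion of connected smooth manifolds. Then the isotropy group $\mathrm{Diff}_i(M) = \{f \in \mathrm{Diff}(M) : i \circ f = i\}$ acts freely on $M$: no non-identity element of $\mathrm{Diff}_i(M)$ has a fixed point. -/
open Function Set
open scoped Manifold Topology

/-- A map with an injective strict derivative at a point (with finite-dimensional domain)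
is injective near that point. -/
theorem aux_flat_locally_injective
    {E : Type*} [NormedAddCommGroup E] [NormedSpace ℝ E] [FiniteDimensional ℝ E]
    {E' : Type*} [NormedAddCommGroup E'] [NormedSpace ℝ E']
    {g : E → E'} {g' : E →L[ℝ] E'} {a : E}
    (hg : HasStrictFDerivAt g g' a) (hinj : Function.Injective g') :
    ∃ s ∈ 𝓝 a, Set.InjOn g s := by
  obtain ⟨K, K0, hK⟩ :=
    (g' : E →ₗ[ℝ] E').exists_antilipschitzWith (LinearMap.ker_eq_bot.2 hinj)
  set c : NNReal := K⁻¹ / 2 with hc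
  have cpos : 0 < c := by positivity
  obtain ⟨s, hs, happ⟩ := hg.approximates_deriv_on_nhds (Or.inr cpos)
  refine ⟨s, hs, fun x hx y hy hxy => ?_⟩
  have h1 : ‖g x - g y - g' (x - y)‖ ≤ c * ‖x - y‖ := happ x hx y hy
  rw [hxy] at h1
  rw [sub_self, zero_sub, norm_neg] at h1
  have h2 : ‖g' (x - y)‖ ≤ c * ‖x - y‖ := h1
  have h3 : dist x y ≤ K * dist (g' x) (g' y) := hK.le_mul_dist x y
  have h4 : dist (g' x) (g' y) = ‖g' (x - y)‖ := by
    rw [dist_eq_norm, ← map_sub]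
  have hdist : dist x y = ‖x - y‖ := dist_eq_norm x y
  have hKc : (K : ℝ) * c = 1 / 2 := by
    rw [hc]
    push_cast
    field_simp
  have hK0' : (0 : ℝ) < K := K0
  have : ‖x - y‖ ≤ (1 / 2) * ‖x - y‖ := by
    calc ‖x - y‖ = dist x y := hdist.symm
      _ ≤ K * ‖g' (x - y)‖ := by rw [← h4]; exact h3
      _ ≤ K * (c * ‖x - y‖) := by
          apply mul_le_mul_of_nonneg_left h2 (le_of_lt hK0')
      _ = (1 / 2) * ‖x - y‖ := by rw [← mul_assoc, hKc]
  have h5 : ‖x - y‖ ≤ 0 := by linarith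
  have h6 : ‖x - y‖ = 0 := le_antisymm h5 (norm_nonneg _)
  exact sub_eq_zero.1 (norm_eq_zero.1 h6)

theorem aux_immersion_locally_injective
    {E : Type*} [NormedAddCommGroup E] [NormedSpace ℝ E] [FiniteDimensional ℝ E]
    {H : Type*} [TopologicalSpace H] {I : ModelWithCorners ℝ E H}
    {M : Type*} [TopologicalSpace M] [ChartedSpace H M] [IsManifold I (⊤ : ℕ∞) M]
    [I.Boundaryless]
    {E' : Type*} [NormedAddCommGroup E'] [NormedSpace ℝ E']
    {H' : Type*} [TopologicalSpace H'] {J : ModelWithCorners ℝ E' H'}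
    {N : Type*} [TopologicalSpace N] [ChartedSpace H' N] [IsManifold J (⊤ : ℕ∞) N]
    (i : M → N) {x₀ : M} (hi : ContMDiffAt I J (⊤ : ℕ∞) i x₀)
    (himm : Function.Injective (mfderiv I J i x₀)) :
    ∃ U ∈ 𝓝 x₀, Set.InjOn i U := by
  have hr : Set.range I = Set.univ := I.range_eq_univ
  set e := extChartAt I x₀ with he
  set g := writtenInExtChartAt I J x₀ i with hgdef
  have hdiff : MDifferentiableAt I J i x₀ := hi.mdifferentiableAt (by simp)
  have hg : ContDiffAt ℝ ((⊤ : ℕ∞) : WithTop ℕ∞) g (e x₀) := by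
    have h2 := (contMDiffAt_iff.1 hi).2
    rw [hr, contDiffWithinAt_univ] at h2
    exact h2
  have hstrict : HasStrictFDerivAt g (fderiv ℝ g (e x₀)) (e x₀) :=
    hg.hasStrictFDerivAt (by simp)
  have hfd : mfderiv I J i x₀ = fderiv ℝ g (e x₀) := by
    rw [hdiff.mfderiv, hr, fderivWithin_univ]
  obtain ⟨s, hs, hinjOn⟩ := aux_flat_locally_injective hstrict (hfd ▸ himm)
  refine ⟨e.source ∩ e ⁻¹' s, Filter.inter_mem (extChartAt_source_mem_nhds x₀)
    ((continuousAt_extChartAt x₀).preimage_mem_nhds hs), ?_⟩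
  intro x hx y hy hxy
  have hx1 : x ∈ e.source := hx.1
  have hy1 : y ∈ e.source := hy.1
  have hgx : g (e x) = extChartAt J (i x₀) (i x) := by
    simp only [hgdef, writtenInExtChartAt, Function.comp_apply, ← he, e.left_inv hx1]
  have hgy : g (e y) = extChartAt J (i x₀) (i y) := by
    simp only [hgdef, writtenInExtChartAt, Function.comp_apply, ← he, e.left_inv hy1]
  have : e x = e y := hinjOn hx.2 hy.2 (by rw [hgx, hgy, hxy])
  exact (extChartAt I x₀).injOn hx1 hy1 this

/-- The isotropy group `Diff_i(M) = {f : i ∘ f = i}` of an immersion of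
connected manifolds acts freely on `M`: an element with a fixed point is the identity. -/
theorem stmt_12
    {E : Type*} [NormedAddCommGroup E] [NormedSpace ℝ E] [FiniteDimensional ℝ E]
    {H : Type*} [TopologicalSpace H] {I : ModelWithCorners ℝ E H}
    {M : Type*} [TopologicalSpace M] [ChartedSpace H M] [IsManifold I (⊤ : ℕ∞) M]
    [T2Space M] [SecondCountableTopology M] [ConnectedSpace M] [I.Boundaryless]
    {E' : Type*} [NormedAddCommGroup E'] [NormedSpace ℝ E'] [FiniteDimensional ℝ E']
    {H' : Type*} [TopologicalSpace H'] {J : ModelWithCorners ℝ E' H'}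
    {N : Type*} [TopologicalSpace N] [ChartedSpace H' N] [IsManifold J (⊤ : ℕ∞) N]
    [T2Space N] [SecondCountableTopology N] [ConnectedSpace N] [J.Boundaryless]
    (hdim : Module.finrank ℝ E ≤ Module.finrank ℝ E')
    (i : M → N) (hi : ContMDiff I J (⊤ : ℕ∞) i)
    (himm : ∀ x : M, Function.Injective (mfderiv I J i x)) :
    ∀ f : Diffeomorph I I M M (⊤ : ℕ∞), (∀ x, i (f x) = i x) → (∃ x, f x = x) → ∀ x, f x = x := by
  intro f hf hex
  set S : Set M := {x | f x = x} with hS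
  have hclosed : IsClosed S := isClosed_eq f.continuous continuous_id
  have hopen : IsOpen S := by
    rw [isOpen_iff_mem_nhds]
    intro x hx
    obtain ⟨U, hU, hUinj⟩ := aux_immersion_locally_injective i (hi x) (himm x)
    have hxU : x ∈ U := mem_of_mem_nhds hU
    have hfU : f ⁻¹' U ∈ 𝓝 x := by
      apply f.continuous.continuousAt.preimage_mem_nhds
      rwa [show f x = x from hx]
    filter_upwards [hU, hfU] with y hyU hyfU
    exact hUinj hyfU hyU (hf y)
  have : S = Set.univ := IsClopen.eq_univ ⟨hclosed, hopen⟩ hex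
  intro x
  have hx : x ∈ S := this ▸ Set.mem_univ x
  exact hx
end

section
/- Let $i : M \to N$ be an immersion of connected second countable smooth manifolds. Then the isotropy group $\mathrm{Diff}_i(M)$ is countable, and if $M$ is compact it is finite. -/
open Function Set Filter
open scoped Manifold Topology ContDiff

/-- An immersion between boundaryless manifolds is locally injective. -/
theorem immersion_locally_injective
    {E : Type*} [NormedAddCommGroup E] [NormedSpace ℝ E] [FiniteDimensional ℝ E]
    {H : Type*} [TopologicalSpace H] {I : ModelWithCorners ℝ E H}
    {M : Type*} [TopologicalSpace M] [ChartedSpace H M] [IsManifold I (⊤ : ℕ∞) M]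
    [I.Boundaryless]
    {E' : Type*} [NormedAddCommGroup E'] [NormedSpace ℝ E'] [FiniteDimensional ℝ E']
    {H' : Type*} [TopologicalSpace H'] {J : ModelWithCorners ℝ E' H'}
    {N : Type*} [TopologicalSpace N] [ChartedSpace H' N] [IsManifold J (⊤ : ℕ∞) N]
    [J.Boundaryless]
    (i : M → N) (hi : ContMDiff I J (⊤ : ℕ∞) i)
    (himm : ∀ x : M, Function.Injective (mfderiv I J i x)) (y : M) :
    ∃ U ∈ 𝓝 y, Set.InjOn i U := by
  set φ := extChartAt I y with hφ
  set g : E → E' := extChartAt J (i y) ∘ i ∘ φ.symm with hg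
  -- `g` is smooth at `φ y`
  have hone : (1 : WithTop ℕ∞) ≤ ((⊤ : ℕ∞) : WithTop ℕ∞) := by exact_mod_cast le_top
  have hgc : ContDiffAt ℝ ((⊤ : ℕ∞) : WithTop ℕ∞) g (φ y) := by
    have := (contMDiffAt_iff.mp (hi y)).2
    rw [I.range_eq_univ, contDiffWithinAt_univ] at this
    exact this
  -- its derivative is the (injective) `mfderiv`
  have hdiff : MDifferentiableAt I J i y := (hi y).mdifferentiableAt (by simp)
  have hA : mfderiv I J i y = fderiv ℝ g (φ y) := by
    simp only [mfderiv, hdiff, ↓reduceIte]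
    simp only [writtenInExtChartAt, I.range_eq_univ, fderivWithin_univ]; rfl
  set A : E →L[ℝ] E' := fderiv ℝ g (φ y) with hAdef
  have hAinj : Function.Injective A := by rw [← hA]; exact himm y
  -- choose a continuous linear left inverse `B` of `A`
  obtain ⟨B, hB⟩ := (A : E →ₗ[ℝ] E').exists_leftInverse_of_injective
    (LinearMap.ker_eq_bot.mpr hAinj)
  set Bc : E' →L[ℝ] E := ⟨B, B.continuous_of_finiteDimensional⟩ with hBc
  -- `Bc ∘ g` has invertible strict derivative at `φ y`, hence is locally injective
  have hgd : HasFDerivAt g A (φ y) := (hgc.differentiableAt (by simp)).hasFDerivAt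
  have hstrict : HasStrictFDerivAt (Bc ∘ g) (Bc.comp A) (φ y) := by
    have hcomp : ContDiffAt ℝ ((⊤ : ℕ∞) : WithTop ℕ∞) (Bc ∘ g) (φ y) :=
      Bc.contDiff.contDiffAt.comp _ hgc
    exact hcomp.hasStrictFDerivAt' (Bc.hasFDerivAt.comp _ hgd) (by simp)
  have hid : Bc.comp A = ((ContinuousLinearEquiv.refl ℝ E :
      E ≃L[ℝ] E) : E →L[ℝ] E) := by
    ext v
    have := LinearMap.congr_fun hB v
    simpa [hBc] using this
  rw [hid] at hstrict
  -- local left inverse gives injectivity on a neighborhood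
  have hinv := hstrict.eventually_left_inverse
  obtain ⟨W, hW, hWinv⟩ := Filter.eventually_iff_exists_mem.mp hinv
  have hWinj : Set.InjOn (Bc ∘ g) W := fun a ha b hb hab => by
    rw [← hWinv a ha, ← hWinv b hb, hab]
  -- transfer back to the manifold
  refine ⟨φ.source ∩ φ ⁻¹' W, ?_, ?_⟩
  · exact Filter.inter_mem (extChartAt_source_mem_nhds y)
      ((continuousAt_extChartAt y).preimage_mem_nhds hW)
  · rintro x₁ ⟨hx₁s, hx₁W⟩ x₂ ⟨hx₂s, hx₂W⟩ hix
    have h1 : (Bc ∘ g) (φ x₁) = (Bc ∘ g) (φ x₂) := by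
      simp only [hg, Function.comp_apply, φ.left_inv hx₁s, φ.left_inv hx₂s, hix]
    have := hWinj hx₁W hx₂W h1
    exact (extChartAt I y).injOn hx₁s hx₂s this

/-- The isotropy group `Diff_i(M)` of an immersion of connected second
countable manifolds is countable, and finite when `M` is compact. -/
theorem stmt_14
    {E : Type*} [NormedAddCommGroup E] [NormedSpace ℝ E] [FiniteDimensional ℝ E]
    {H : Type*} [TopologicalSpace H] {I : ModelWithCorners ℝ E H}
    {M : Type*} [TopologicalSpace M] [ChartedSpace H M] [IsManifold I (⊤ : ℕ∞) M]
    [T2Space M] [SecondCountableTopology M] [ConnectedSpace M] [I.Boundaryless]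
    {E' : Type*} [NormedAddCommGroup E'] [NormedSpace ℝ E'] [FiniteDimensional ℝ E']
    {H' : Type*} [TopologicalSpace H'] {J : ModelWithCorners ℝ E' H'}
    {N : Type*} [TopologicalSpace N] [ChartedSpace H' N] [IsManifold J (⊤ : ℕ∞) N]
    [T2Space N] [SecondCountableTopology N] [ConnectedSpace N] [J.Boundaryless]
    (hdim : Module.finrank ℝ E ≤ Module.finrank ℝ E')
    (i : M → N) (hi : ContMDiff I J (⊤ : ℕ∞) i)
    (himm : ∀ x : M, Function.Injective (mfderiv I J i x)) :
    Countable {f : M ≃ₘ⟮I, I⟯ M // ∀ x, i (f x) = i x} ∧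
      (CompactSpace M → Finite {f : M ≃ₘ⟮I, I⟯ M // ∀ x, i (f x) = i x}) := by
  have locInj := immersion_locally_injective i hi himm
  obtain ⟨x₀⟩ : Nonempty M := inferInstance
  -- the fiber of `i` through `x₀`
  set F : Set M := {x | i x = i x₀} with hF
  -- the fiber is discrete
  have hdisc : DiscreteTopology F := by
    rw [discreteTopology_subtype_iff]
    intro x hx
    obtain ⟨U, hU, hUinj⟩ := locInj x
    rw [← Filter.empty_mem_iff_bot]
    have h1 : U ∩ {x}ᶜ ∈ 𝓝[≠] x :=
      Filter.inter_mem (mem_nhdsWithin_of_mem_nhds hU) self_mem_nhdsWithin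
    have h2 : (U ∩ {x}ᶜ) ∩ F ∈ 𝓝[≠] x ⊓ 𝓟 F :=
      Filter.inter_mem_inf h1 (Filter.mem_principal_self F)
    have he : U ∩ {x}ᶜ ∩ F = ∅ := by
      rw [Set.eq_empty_iff_forall_notMem]
      rintro z ⟨⟨hzU, hzne⟩, hzF⟩
      exact hzne (hUinj hzU (mem_of_mem_nhds hU) (by rw [hzF, hx]))
    rw [← he]
    exact h2
  -- every isotropy element is determined by its value at `x₀`
  set ev : {f : M ≃ₘ⟮I, I⟯ M // ∀ x, i (f x) = i x} → F :=
    fun f => ⟨f.1 x₀, f.2 x₀⟩ with hev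
  have hevinj : Function.Injective ev := by
    rintro ⟨f, hf⟩ ⟨g, hg⟩ h
    have h0 : f x₀ = g x₀ := congrArg Subtype.val h
    have hclopen : IsClopen {x : M | f x = g x} := by
      constructor
      · exact isClosed_eq f.continuous g.continuous
      · rw [isOpen_iff_mem_nhds]
        intro x hx
        obtain ⟨U, hU, hUinj⟩ := locInj (f x)
        have hUg : U ∈ 𝓝 (g x) := by rwa [← hx]
        have hV : f ⁻¹' U ∩ g ⁻¹' U ∈ 𝓝 x :=
          Filter.inter_mem (f.continuous.continuousAt.preimage_mem_nhds hU)
            (g.continuous.continuousAt.preimage_mem_nhds hUg)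
        refine Filter.mem_of_superset hV ?_
        rintro x' ⟨hx'f, hx'g⟩
        exact hUinj hx'f hx'g (by rw [hf x', hg x'])
    have huniv := hclopen.eq_univ ⟨x₀, h0⟩
    have hall : ∀ x, f x = g x := fun x => by
      have hx : x ∈ {x : M | f x = g x} := huniv ▸ Set.mem_univ x
      exact hx
    exact Subtype.ext (Diffeomorph.ext hall)
  constructor
  · haveI : Countable F := TopologicalSpace.separableSpace_iff_countable.mp inferInstance
    exact hevinj.countable
  · intro hcomp
    have hclosed : IsClosed F := by
      have : F = i ⁻¹' {i x₀} := rfl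
      rw [this]
      exact (isClosed_singleton).preimage hi.continuous
    have hfin : F.Finite := hclosed.isCompact.finite (isDiscrete_iff_discreteTopology.mpr hdisc)
    have : Finite F := hfin.to_subtype
    exact Finite.of_injective ev hevinj
end
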